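/- arXiv:1705.10963 — 3 statements merged into one kernel-verified Lean document; each statement's English description precedes it below -/
import Mathlib

section
/- Spun(d) = {γ·(1 + e_{d+1}e_{d+2}·i(v)) : γ ∈ Spin(d), v ∈ ℝ^d}, and every element of Spun(d) corresponds to a unique pair (γ, v) ∈ Spin(d) × ℝ^d. -/
noncomputable section

open CliffordAlgebra

/-- The negative definite quadratic form `v ↦ -‖v‖²` on `ℝ^n`. -/
def Qn (n : ℕ) : QuadraticForm ℝ (Fin n → ℝ) :=
  QuadraticMap.weightedSumSquares ℝ (fun _ : Fin n => (-1 : ℝ))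

/-- The Clifford algebra `Cl_n = Cl(ℝ^n, -‖·‖²)`, with generators `e_1, …, e_n`
satisfying `e_j² = -1` and `e_je_k = -e_ke_j` for `j ≠ k`. -/
abbrev Cl (n : ℕ) := CliffordAlgebra (Qn n)

/-- The generators `e_1, …, e_n` of `Cl_n` (0-indexed). -/
def gC (n : ℕ) (j : Fin n) : Cl n := CliffordAlgebra.ι (Qn n) (Pi.single j 1)

/-- The conjugate `x̄ = α(t(x))`, where `α` is the grade involution and `t` the reversal. -/
def conjC (n : ℕ) (x : Cl n) : Cl n := reverse (involute x)

/-- The linear embedding `i : ℝ^n → Cl_n`. -/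
def iC (n : ℕ) (v : Fin n → ℝ) : Cl n := CliffordAlgebra.ι (Qn n) v

/-- Products of distinct generators of `Cl_n`, in increasing order of index. -/
def sprodC (n : ℕ) (s : Finset (Fin n)) : Cl n := ((s.sort (· ≤ ·)).map (gC n)).prod

/-- The even part `Cl_n^0`: the span of `1` and the products of an even number of
distinct generators. -/
def ClE0 (n : ℕ) : Submodule ℝ (Cl n) :=
  Submodule.span ℝ {x | ∃ s : Finset (Fin n), Even s.card ∧ x = sprodC n s}

/-- The span of the `m`-terms of `Cl_n`: real multiples of products of `m` distinct
generators. -/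
def mTermsC (n m : ℕ) : Submodule ℝ (Cl n) :=
  Submodule.span ℝ {x | ∃ s : Finset (Fin n), s.card = m ∧ x = sprodC n s}

/-- `Spin(n)` inside `Cl_n`. -/
def SpinC (n : ℕ) : Set (Cl n) :=
  {x | x ∈ ClE0 n ∧ x * conjC n x = 1 ∧
    ∀ v : Fin n → ℝ, ∃ w : Fin n → ℝ, x * iC n v * conjC n x = iC n w}

/-- The coefficient of `1` of an element of `Cl_n` (computed via the normalized trace
of left-multiplication, which agrees with the coefficient of `1` w.r.t. the standard
monomial basis since `dim Cl_n = 2^n`). -/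
def coeff1C (n : ℕ) (x : Cl n) : ℝ :=
  (2 ^ n : ℝ)⁻¹ * LinearMap.trace ℝ (Cl n) (LinearMap.mulLeft ℝ x)

/-- `X_d`, realized as the dual numbers over `Cl_{d+1}`; the dual-number generator `ε`
is central with `ε² = 0` and plays the role of `e_{d+2}`. -/
abbrev Xa (d : ℕ) := DualNumber (Cl (d + 1))

namespace X

variable (d : ℕ)

/-- `e_1, …, e_{d+1}` (0-indexed) inside `X_d`. -/
def e (j : Fin (d + 1)) : Xa d := TrivSqZeroExt.inl (gC (d + 1) j)

/-- `e_{d+2}`. -/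
def eps : Xa d := DualNumber.eps

/-- The generator `e_{d+1}`. -/
def eL : Xa d := e d (Fin.last d)

/-- The embedding of `ℝ^k` into `X_d` using the first `k` generators. -/
def iK (k : ℕ) (v : Fin k → ℝ) : Xa d :=
  TrivSqZeroExt.inl (CliffordAlgebra.ι (Qn (d + 1))
    (fun j : Fin (d + 1) => if h : (j : ℕ) < k then v ⟨j, h⟩ else 0))

/-- `i : ℝ^d → X_d`. -/
def iMap (v : Fin d → ℝ) : Xa d := iK d d v

/-- The conjugate `x̄ = α(t(x))` on `X_d`. -/
def conj (x : Xa d) : Xa d :=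
  TrivSqZeroExt.inl (conjC (d + 1) (TrivSqZeroExt.fst x)) +
    TrivSqZeroExt.inr (conjC (d + 1) (TrivSqZeroExt.snd x))

/-- The norm `N(x) = x·x̄`. -/
def Nm (x : Xa d) : Xa d := x * conj d x

/-- The generating family of `Z_d^0`: `e_1, …, e_d` and `e_{d+1}e_{d+2}`. -/
def zgen (j : Fin (d + 1)) : Xa d := if (j : ℕ) < d then e d j else eL d * eps d

/-- Products of distinct elements of a family, in increasing order of index. -/
def sprod (f : Fin (d + 1) → Xa d) (s : Finset (Fin (d + 1))) : Xa d :=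
  ((s.sort (· ≤ ·)).map f).prod

/-- `Z_d^0`: the span of `1` and the products of an even number of distinct elements
of `{e_1, …, e_d, e_{d+1}e_{d+2}}`. -/
def Z0 : Submodule ℝ (Xa d) :=
  Submodule.span ℝ {x | ∃ s : Finset (Fin (d + 1)), Even s.card ∧ x = sprod d (zgen d) s}

/-- The span of the `m`-terms of `Z_d^0`. -/
def Zterms (m : ℕ) : Submodule ℝ (Xa d) :=
  Submodule.span ℝ {x | ∃ s : Finset (Fin (d + 1)), s.card = m ∧ x = sprod d (zgen d) s}

/-- The even Clifford algebra `Cl_k^0` (for `k ≤ d`), viewed inside `X_d`. -/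
def ClE (k : ℕ) : Submodule ℝ (Xa d) :=
  Submodule.span ℝ {x | ∃ s : Finset (Fin (d + 1)),
    (∀ j ∈ s, (j : ℕ) < k) ∧ Even s.card ∧ x = sprod d (e d) s}

/-- `Spun(d)`. -/
def Spun : Set (Xa d) :=
  {z | z ∈ Z0 d ∧ Nm d z = 1 ∧
    ∀ v : Fin d → ℝ, ∃ w : Fin d → ℝ,
      z * (eps d * iMap d v + eL d) * conj d z = eps d * iMap d w + eL d}

/-- `Spin(k)` (for `k ≤ d`), viewed inside `X_d`. -/
def Spin (k : ℕ) : Set (Xa d) :=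
  {x | x ∈ ClE d k ∧ Nm d x = 1 ∧
    ∀ v : Fin k → ℝ, ∃ w : Fin k → ℝ, x * iK d k v * conj d x = iK d k w}

/-- `T_{ap}`: the elements of `Spun(d)` whose action takes `a` to `p`. -/
def T (a p : Fin d → ℝ) : Set (Xa d) :=
  {x | x ∈ Spun d ∧ x * (eps d * iMap d a + eL d) * conj d x = eps d * iMap d p + eL d}

/-- `F_{ap} = (1 + ½e_{d+1}e_{d+2}i(p))·Cl_d^0·(1 − ½e_{d+1}e_{d+2}i(a))`. -/
def F (a p : Fin d → ℝ) : Set (Xa d) :=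
  (fun y => (1 + (2 : ℝ)⁻¹ • (eL d * eps d * iMap d p)) * y *
      (1 - (2 : ℝ)⁻¹ • (eL d * eps d * iMap d a))) '' (ClE d d : Set (Xa d))

/-- The coefficient of `1` of an element of `X_d`. -/
def c1 (x : Xa d) : ℝ := coeff1C (d + 1) (TrivSqZeroExt.fst x)

/-- The index set for the 2-term coordinates of `Z_d^0`; it has `d(d+1)/2` elements.
A pair `(j,k)` with `k < last` indexes the 2-term `e_{j+1}e_{k+1}`, while a pair
`(j, last)` indexes the 2-term `e_{j+1}e_{d+1}e_{d+2}`. -/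
abbrev Idx := {p : Fin (d + 1) × Fin (d + 1) // p.1 < p.2}

/-- The coefficient of the 2-term indexed by `p`. -/
def c2 (p : Idx d) (x : Xa d) : ℝ :=
  if (p.1.2 : ℕ) < d
  then coeff1C (d + 1) (gC (d + 1) p.1.2 * gC (d + 1) p.1.1 * TrivSqZeroExt.fst x)
  else coeff1C (d + 1) (gC (d + 1) p.1.2 * gC (d + 1) p.1.1 * TrivSqZeroExt.snd x)

/-- The hyperplane `H_0 = {x₁ = 0}` (coefficient of `1` vanishes). -/
def H0 : Set (Xa d) := {x | c1 d x = 0}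

/-- The map `η_d = π' ∘ π`: scale so that the coefficient of `1` is `1`, then keep only
the 2-term coordinates. -/
def eta (x : Xa d) : Idx d → ℝ := fun p => (c1 d x)⁻¹ * c2 d p x

/-- `Spun(d)_+`: elements of `Spun(d)` with positive coefficient of `1`. -/
def SpunP : Set (Xa d) := {x | x ∈ Spun d ∧ 0 < c1 d x}

/-- `L_{ap} = η_d(T_{ap} \ H_0)`. -/
def L (a p : Fin d → ℝ) : Set (Idx d → ℝ) := eta d '' (T d a p \ H0 d)

end X

namespace SpunAux

variable {n : ℕ}

lemma Qn_apply (v : Fin n → ℝ) : Qn n v = ∑ i, -(v i * v i) := by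
  rw [Qn, QuadraticMap.weightedSumSquares_apply]
  exact Finset.sum_congr rfl fun i _ => by simp [neg_mul]

lemma isOrtho_of_pointwise {v w : Fin n → ℝ} (h : ∀ i, v i * w i = 0) :
    (Qn n).IsOrtho v w := by
  unfold QuadraticMap.IsOrtho
  rw [Qn_apply, Qn_apply, Qn_apply, ← Finset.sum_add_distrib]
  refine Finset.sum_congr rfl fun i _ => ?_
  have h2 := h i
  have : (v i + w i) * (v i + w i) = v i * v i + w i * w i := by ring_nf; nlinarith [h i]
  rw [Pi.add_apply, this]; ring

lemma iota_anti {v w : Fin n → ℝ} (h : ∀ i, v i * w i = 0) :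
    ι (Qn n) v * ι (Qn n) w = -(ι (Qn n) w * ι (Qn n) v) := by
  have := ι_mul_ι_add_swap_of_isOrtho (isOrtho_of_pointwise h)
  linear_combination (norm := noncomm_ring) this

lemma g_anti {j k : Fin n} (h : j ≠ k) : gC n j * gC n k = -(gC n k * gC n j) := by
  refine iota_anti fun i => ?_
  rcases eq_or_ne i j with rfl | hij
  · rw [Pi.single_eq_of_ne h, mul_zero]
  · rw [Pi.single_eq_of_ne hij, zero_mul]

lemma g_sq (j : Fin n) : gC n j * gC n j = -1 := by
  rw [gC, ι_sq_scalar, Qn_apply]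
  rw [Finset.sum_eq_single j (fun b _ hb => by rw [Pi.single_eq_of_ne hb]; ring)
    (fun h => absurd (Finset.mem_univ j) h)]
  simp

def prodL (n : ℕ) (l : List (Fin n)) : Cl n := (l.map (gC n)).prod

@[simp] lemma prodL_nil : prodL n [] = 1 := rfl

lemma prodL_cons (a : Fin n) (l : List (Fin n)) :
    prodL n (a :: l) = gC n a * prodL n l := by simp [prodL]

lemma prodL_append (l₁ l₂ : List (Fin n)) :
    prodL n (l₁ ++ l₂) = prodL n l₁ * prodL n l₂ := by simp [prodL]

lemma sprodC_eq_prodL (s : Finset (Fin n)) : sprodC n s = prodL n (s.sort (· ≤ ·)) := rfl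

@[simp] lemma sprodC_empty : sprodC n ∅ = 1 := by simp [sprodC]

@[simp] lemma sprodC_singleton (j : Fin n) : sprodC n {j} = gC n j := by
  simp [sprodC]

/-- equal up to sign -/
def PM {A : Type*} [Ring A] (x y : A) : Prop := x = y ∨ x = -y

namespace PM
variable {A : Type*} [Ring A] {x y z : A}

lemma rfl' (x : A) : PM x x := Or.inl rfl
lemma of_eq (h : x = y) : PM x y := Or.inl h
lemma neg_of_eq (h : x = -y) : PM x y := Or.inr h
lemma trans (h1 : PM x y) (h2 : PM y z) : PM x z := by
  rcases h1 with h1 | h1 <;> rcases h2 with h2 | h2 <;> simp [h1, h2, PM]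
lemma mul_left (a : A) (h : PM x y) : PM (a * x) (a * y) := by
  rcases h with h | h <;> simp [h, PM]
lemma mul_right (a : A) (h : PM x y) : PM (x * a) (y * a) := by
  rcases h with h | h <;> simp [h, PM, neg_mul]
lemma neg_right (h : PM x y) : PM x (-y) := by
  rcases h with h | h <;> simp [h, PM]
lemma mem [Module ℝ A] {S : Submodule ℝ A} (h : PM x y) (hy : y ∈ S) : x ∈ S := by
  rcases h with h | h
  · rwa [h]
  · rw [h]; exact neg_mem hy
end PM

lemma pm_comm_list (j : Fin n) : ∀ (l : List (Fin n)), j ∉ l →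
    PM (prodL n l * gC n j) (gC n j * prodL n l) := by
  intro l
  induction l with
  | nil => intro _; simp [PM]
  | cons a l ih =>
    intro hj
    have hja : a ≠ j := fun h => hj (h ▸ List.mem_cons_self)
    have hmem : j ∉ l := fun h => hj (List.mem_cons_of_mem _ h)
    rw [prodL_cons, mul_assoc]
    refine ((ih hmem).mul_left (gC n a)).trans ?_
    rw [← mul_assoc, g_anti hja, neg_mul, mul_assoc]
    exact PM.neg_of_eq rfl

lemma sprodC_insert_min {b : Fin n} {t : Finset (Fin n)} (hb : b ∉ t)
    (hmin : ∀ c ∈ t, b ≤ c) : sprodC n (insert b t) = gC n b * sprodC n t := by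
  rw [sprodC_eq_prodL, Finset.sort_insert _ hmin hb, prodL_cons, sprodC_eq_prodL]

lemma sprodC_min_decomp {s : Finset (Fin n)} (hs : s.Nonempty) :
    sprodC n s = gC n (s.min' hs) * sprodC n (s.erase (s.min' hs)) := by
  conv_lhs => rw [← Finset.insert_erase (s.min'_mem hs)]
  exact sprodC_insert_min (Finset.notMem_erase _ _)
    (fun c hc => s.min'_le c (Finset.mem_of_mem_erase hc))

end SpunAux
namespace SpunAux
variable {n : ℕ}

lemma sprodC_decomp {b : Fin n} {s : Finset (Fin n)} (hbmem : b ∈ s)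
    (hbmin : ∀ c ∈ s, b ≤ c) :
    sprodC n s = gC n b * sprodC n (s.erase b) := by
  conv_lhs => rw [← Finset.insert_erase hbmem]
  exact sprodC_insert_min (Finset.notMem_erase _ _)
    (fun c hc => hbmin c (Finset.mem_of_mem_erase hc))

lemma pm_insert {a : Fin n} : ∀ (s : Finset (Fin n)), a ∉ s →
    PM (gC n a * sprodC n s) (sprodC n (insert a s)) := by
  intro s
  induction s using Finset.strongInduction with
  | _ s ih =>
    intro ha
    by_cases hmin : ∀ c ∈ s, a ≤ c
    · exact PM.of_eq (sprodC_insert_min ha hmin).symm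
    · push_neg at hmin
      obtain ⟨c, hc, hca⟩ := hmin
      have hs : s.Nonempty := ⟨c, hc⟩
      obtain ⟨b, hbmem, hbmin⟩ : ∃ b ∈ s, ∀ c' ∈ s, b ≤ c' :=
        ⟨s.min' hs, s.min'_mem hs, fun c' hc' => s.min'_le c' hc'⟩
      have hba : b < a := lt_of_le_of_lt (hbmin c hc) hca
      have hbne : b ≠ a := ne_of_lt hba
      have hbs' : b ∉ s.erase b := Finset.notMem_erase _ _
      have has' : a ∉ s.erase b := fun h => ha (Finset.mem_of_mem_erase h)
      have hcard : s.erase b ⊂ s := Finset.erase_ssubset hbmem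
      have IH := ih (s.erase b) hcard has'
      rw [sprodC_decomp hbmem hbmin, ← mul_assoc, g_anti hbne.symm, neg_mul, mul_assoc]
      refine (PM.neg_of_eq rfl).trans (((IH.mul_left (gC n b))).trans ?_)
      have hmin2 : ∀ c' ∈ insert a (s.erase b), b ≤ c' := by
        intro c' hc'
        rcases Finset.mem_insert.mp hc' with rfl | hc'
        · exact le_of_lt hba
        · exact hbmin c' (Finset.mem_of_mem_erase hc')
      have hbnotin : b ∉ insert a (s.erase b) := by
        simp only [Finset.mem_insert]
        rintro (rfl | h)
        · exact hbne rfl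
        · exact hbs' h
      refine PM.of_eq ?_
      rw [← sprodC_insert_min hbnotin hmin2]
      congr 1
      rw [Finset.insert_comm, Finset.insert_erase hbmem]

lemma pm_mul_g : ∀ (s : Finset (Fin n)) (j : Fin n),
    PM (sprodC n s * gC n j)
      (sprodC n (if j ∈ s then s.erase j else insert j s)) := by
  intro s
  induction s using Finset.strongInduction with
  | _ s ih =>
    intro j
    rcases Finset.eq_empty_or_nonempty s with rfl | hs
    · rw [if_neg (Finset.notMem_empty j)]
      exact PM.of_eq (by simp)
    · obtain ⟨b, hbmem, hbmin⟩ : ∃ b ∈ s, ∀ c' ∈ s, b ≤ c' :=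
        ⟨s.min' hs, s.min'_mem hs, fun c' hc' => s.min'_le c' hc'⟩
      have hbs' : b ∉ s.erase b := Finset.notMem_erase _ _
      have hcard : s.erase b ⊂ s := Finset.erase_ssubset hbmem
      rcases eq_or_ne j b with rfl | hjb
      · rw [if_pos hbmem, sprodC_decomp hbmem hbmin, mul_assoc]
        have h2 : j ∉ (s.erase j).sort (· ≤ ·) := by
          intro h; exact hbs' (Finset.mem_sort _ |>.mp h)
        refine ((pm_comm_list j _ h2).mul_left (gC n j)).trans ?_
        rw [← mul_assoc, g_sq, neg_mul, one_mul]
        exact PM.neg_of_eq rfl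
      · have IH := ih (s.erase b) hcard j
        rw [sprodC_decomp hbmem hbmin, mul_assoc]
        refine (IH.mul_left (gC n b)).trans ?_
        have hbt' : b ∉ (if j ∈ s.erase b then (s.erase b).erase j else insert j (s.erase b)) := by
          split
          · exact fun h => hbs' (Finset.mem_of_mem_erase h)
          · simp only [Finset.mem_insert]
            rintro (rfl | h)
            · exact hjb rfl
            · exact hbs' h
        refine (pm_insert _ hbt').trans (PM.of_eq ?_)
        congr 1
        have hjs' : j ∈ s.erase b ↔ j ∈ s := by
          rw [Finset.mem_erase]; exact ⟨fun h => h.2, fun h => ⟨hjb, h⟩⟩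
        by_cases hj : j ∈ s
        · rw [if_pos (hjs'.mpr hj), if_pos hj]
          ext x
          simp only [Finset.mem_insert, Finset.mem_erase]
          constructor
          · rintro (rfl | ⟨hxj, _, hxs⟩)
            · exact ⟨Ne.symm hjb, hbmem⟩
            · exact ⟨hxj, hxs⟩
          · rintro ⟨hxj, hxs⟩
            rcases eq_or_ne x b with rfl | hxb
            · exact Or.inl rfl
            · exact Or.inr ⟨hxj, hxb, hxs⟩
        · rw [if_neg (fun h => hj (hjs'.mp h)), if_neg hj,
            Finset.insert_comm, Finset.insert_erase hbmem]

lemma sprod_mul_sprod_mem : ∀ (t s : Finset (Fin n)),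
    sprodC n s * sprodC n t ∈ Submodule.span ℝ
      {x | ∃ u : Finset (Fin n), ↑u ⊆ (↑s ∪ ↑t : Set (Fin n)) ∧
        u.card % 2 = (s.card + t.card) % 2 ∧ x = sprodC n u} := by
  intro t
  induction t using Finset.strongInduction with
  | _ t ih =>
    intro s
    rcases Finset.eq_empty_or_nonempty t with rfl | ht
    · refine Submodule.subset_span ⟨s, by simp, by simp, by simp⟩
    · obtain ⟨b, hbmem, hbmin⟩ : ∃ b ∈ t, ∀ c' ∈ t, b ≤ c' :=
        ⟨t.min' ht, t.min'_mem ht, fun c' hc' => t.min'_le c' hc'⟩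
      have hcard : t.erase b ⊂ t := Finset.erase_ssubset hbmem
      rw [sprodC_decomp hbmem hbmin, ← mul_assoc]
      have hpm := pm_mul_g s b
      set s₁ := if b ∈ s then s.erase b else insert b s with hs₁
      have hsub : (↑s₁ ∪ ↑(t.erase b) : Set (Fin n)) ⊆ ↑s ∪ ↑t := by
        apply Set.union_subset
        · intro x hx
          rw [hs₁] at hx
          split at hx
          · exact Or.inl (Finset.mem_of_mem_erase hx)
          · rcases Finset.mem_insert.mp hx with rfl | hx
            · exact Or.inr (Finset.mem_coe.mpr hbmem)
            · exact Or.inl hx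
        · exact fun x hx => Or.inr (Finset.mem_of_mem_erase hx)
      have hpar : (s₁.card + (t.erase b).card) % 2 = (s.card + t.card) % 2 := by
        have h1 : (t.erase b).card = t.card - 1 := Finset.card_erase_of_mem hbmem
        have h2 : 1 ≤ t.card := Finset.card_pos.mpr ht
        rw [hs₁]
        by_cases hbs : b ∈ s
        · rw [if_pos hbs, Finset.card_erase_of_mem hbs, h1]
          have h4 : 1 ≤ s.card := Finset.card_pos.mpr ⟨b, hbs⟩
          omega
        · rw [if_neg hbs, Finset.card_insert_of_notMem hbs, h1]
          omega
      have hspan := ih (t.erase b) hcard s₁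
      have hle : Submodule.span ℝ
          {x | ∃ u : Finset (Fin n), ↑u ⊆ (↑s₁ ∪ ↑(t.erase b) : Set (Fin n)) ∧
            u.card % 2 = (s₁.card + (t.erase b).card) % 2 ∧ x = sprodC n u} ≤
          Submodule.span ℝ
          {x | ∃ u : Finset (Fin n), ↑u ⊆ (↑s ∪ ↑t : Set (Fin n)) ∧
            u.card % 2 = (s.card + t.card) % 2 ∧ x = sprodC n u} := by
        apply Submodule.span_mono
        rintro x ⟨u, hu1, hu2, rfl⟩
        exact ⟨u, hu1.trans hsub, by rw [hu2, hpar], rfl⟩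
      rcases hpm with h | h
      · rw [h]; exact hle hspan
      · rw [h, neg_mul]; exact neg_mem (hle hspan)

end SpunAux
namespace SpunAux
variable {n : ℕ}

/-- span of products of generators with indices `< k`, parity `p`. -/
def Epart (n k p : ℕ) : Submodule ℝ (Cl n) :=
  Submodule.span ℝ {x | ∃ s : Finset (Fin n),
    (∀ j ∈ s, (j : ℕ) < k) ∧ s.card % 2 = p ∧ x = sprodC n s}

lemma Epart_mul {k p q : ℕ} {x y : Cl n} (hx : x ∈ Epart n k p) (hy : y ∈ Epart n k q)
    (r : ℕ) (hr : (p + q) % 2 = r % 2) : x * y ∈ Epart n k (r % 2) := by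
  induction hx using Submodule.span_induction with
  | zero => rw [zero_mul]; exact zero_mem _
  | add a b _ _ ha hb => rw [add_mul]; exact add_mem ha hb
  | smul c a _ ha => rw [smul_mul_assoc]; exact Submodule.smul_mem _ _ ha
  | mem a hmem =>
    obtain ⟨s, hsb, hsp, rfl⟩ := hmem
    induction hy using Submodule.span_induction with
    | zero => rw [mul_zero]; exact zero_mem _
    | add a b _ _ ha hb => rw [mul_add]; exact add_mem ha hb
    | smul c a _ ha => rw [mul_smul_comm]; exact Submodule.smul_mem _ _ ha
    | mem b hbmem =>
      obtain ⟨t, htb, htp, rfl⟩ := hbmem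
      refine Submodule.span_le.mpr ?_ (sprod_mul_sprod_mem t s)
      rintro z ⟨u, hu1, hu2, rfl⟩
      refine Submodule.subset_span ⟨u, ?_, ?_, rfl⟩
      · intro j hj
        rcases hu1 hj with h | h
        · exact hsb j h
        · exact htb j h
      · omega

lemma one_mem_Epart (k : ℕ) : (1 : Cl n) ∈ Epart n k 0 :=
  Submodule.subset_span ⟨∅, by simp, by simp, by simp⟩

/-- conjugation as a linear map -/
def conjL (n : ℕ) : Cl n →ₗ[ℝ] Cl n :=
  (reverse (R := ℝ)).comp (involute.toLinearMap)

lemma conjC_eq (x : Cl n) : conjC n x = conjL n x := rfl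

lemma conjC_add (x y : Cl n) : conjC n (x + y) = conjC n x + conjC n y := by
  simp [conjC_eq, map_add]

lemma conjC_smul (c : ℝ) (x : Cl n) : conjC n (c • x) = c • conjC n x := by
  simp [conjC_eq, map_smul]

lemma conjC_one : conjC n 1 = 1 := by simp [conjC]

lemma conjC_mul (x y : Cl n) : conjC n (x * y) = conjC n y * conjC n x := by
  simp [conjC, map_mul, reverse.map_mul]

lemma conjC_neg (x : Cl n) : conjC n (-x) = -conjC n x := by simp [conjC]

lemma conjC_conjC (x : Cl n) : conjC n (conjC n x) = x := by
  rw [conjC, conjC, ← reverse_involute, involute_involute, reverse_reverse]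

lemma conjC_iota (v : Fin n → ℝ) : conjC n (ι (Qn n) v) = -ι (Qn n) v := by
  rw [conjC, involute_ι, map_neg, reverse_ι]

lemma conjC_g (j : Fin n) : conjC n (gC n j) = -gC n j := conjC_iota _

lemma conjC_sprod_pm (s : Finset (Fin n)) : PM (conjC n (sprodC n s)) (sprodC n s) := by
  induction s using Finset.strongInduction with
  | _ s ih =>
    rcases Finset.eq_empty_or_nonempty s with rfl | hs
    · simp only [sprodC_empty, conjC_one]; exact PM.rfl' 1
    · obtain ⟨b, hbmem, hbmin⟩ : ∃ b ∈ s, ∀ c' ∈ s, b ≤ c' :=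
        ⟨s.min' hs, s.min'_mem hs, fun c' hc' => s.min'_le c' hc'⟩
      have hcard : s.erase b ⊂ s := Finset.erase_ssubset hbmem
      rw [sprodC_decomp hbmem hbmin, conjC_mul, conjC_g, mul_neg]
      refine (PM.neg_of_eq rfl).trans ?_
      refine ((ih _ hcard).mul_right (gC n b)).trans ?_
      have h2 : b ∉ (s.erase b).sort (· ≤ ·) := by
        intro h; exact (Finset.notMem_erase b s) (Finset.mem_sort _ |>.mp h)
      refine (pm_comm_list b _ h2).trans (PM.of_eq rfl)

lemma conjC_Epart {k p : ℕ} {x : Cl n} (hx : x ∈ Epart n k p) :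
    conjC n x ∈ Epart n k p := by
  induction hx using Submodule.span_induction with
  | zero =>
    simp only [conjC_eq, map_zero]
    exact zero_mem _
  | add a b _ _ ha hb => rw [conjC_add]; exact add_mem ha hb
  | smul c a _ ha => rw [conjC_smul]; exact Submodule.smul_mem _ _ ha
  | mem a hmem =>
    obtain ⟨s, hsb, hsp, rfl⟩ := hmem
    exact (conjC_sprod_pm s).mem (Submodule.subset_span ⟨s, hsb, hsp, rfl⟩)

/-- the whole algebra is spanned by the products of generators -/
lemma top_le_span_sprod :
    (⊤ : Submodule ℝ (Cl n)) ≤ Submodule.span ℝ (Set.range (sprodC n)) := by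
  suffices h : ∀ x : Cl n, x ∈ Submodule.span ℝ (Set.range (sprodC n)) from
    fun x _ => h x
  intro x
  have hmul : ∀ y z : Cl n, y ∈ Submodule.span ℝ (Set.range (sprodC n)) →
      z ∈ Submodule.span ℝ (Set.range (sprodC n)) →
      y * z ∈ Submodule.span ℝ (Set.range (sprodC n)) := by
    intro y z hy hz
    induction hy using Submodule.span_induction with
    | zero => rw [zero_mul]; exact zero_mem _
    | add a b _ _ ha hb => rw [add_mul]; exact add_mem ha hb
    | smul c a _ ha => rw [smul_mul_assoc]; exact Submodule.smul_mem _ _ ha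
    | mem a hmem =>
      obtain ⟨s, rfl⟩ := hmem
      induction hz using Submodule.span_induction with
      | zero => rw [mul_zero]; exact zero_mem _
      | add a b _ _ ha hb => rw [mul_add]; exact add_mem ha hb
      | smul c a _ ha => rw [mul_smul_comm]; exact Submodule.smul_mem _ _ ha
      | mem b hbmem =>
        obtain ⟨t, rfl⟩ := hbmem
        refine Submodule.span_le.mpr ?_ (sprod_mul_sprod_mem t s)
        rintro z ⟨u, _, _, rfl⟩
        exact Submodule.subset_span ⟨u, rfl⟩
  have hiota : ∀ v : Fin n → ℝ, ι (Qn n) v ∈ Submodule.span ℝ (Set.range (sprodC n)) := by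
    intro v
    have hv : v = ∑ j : Fin n, v j • (Pi.single j 1 : Fin n → ℝ) := by
      funext i
      rw [Finset.sum_apply]
      rw [Finset.sum_eq_single i (fun b _ hb => by
            rw [Pi.smul_apply, Pi.single_eq_of_ne (Ne.symm hb), smul_zero])
        (fun h => absurd (Finset.mem_univ i) h)]
      simp
    rw [hv, map_sum]
    refine sum_mem fun j _ => ?_
    rw [map_smul]
    exact Submodule.smul_mem _ _ (Submodule.subset_span ⟨{j}, by simp [gC]⟩)
  induction x using CliffordAlgebra.induction with
  | algebraMap r =>
    rw [Algebra.algebraMap_eq_smul_one]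
    exact Submodule.smul_mem _ _ (Submodule.subset_span ⟨∅, by simp⟩)
  | ι v => exact hiota v
  | mul a b ha hb => exact hmul a b ha hb
  | add a b ha hb => exact add_mem ha hb

instance : Module.Finite ℝ (Cl n) := by
  rw [Module.finite_def]
  refine ⟨(Set.finite_range (sprodC n)).toFinset, le_antisymm le_top ?_⟩
  rw [Set.Finite.coe_toFinset]
  exact top_le_span_sprod

lemma mul_eq_one_comm' {x y : Cl n} (h : x * y = 1) : y * x = 1 := by
  have h1 : LinearMap.mulLeft ℝ x * LinearMap.mulLeft ℝ y = 1 := by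
    rw [show LinearMap.mulLeft ℝ x * LinearMap.mulLeft ℝ y
        = LinearMap.mulLeft ℝ x ∘ₗ LinearMap.mulLeft ℝ y from rfl,
      ← LinearMap.mulLeft_mul, h, LinearMap.mulLeft_one]
    rfl
  have h2 := mul_eq_one_comm.mp h1
  have h3 := congrArg (fun f : Cl n →ₗ[ℝ] Cl n => f 1) h2
  simpa using h3

lemma iota_injective : Function.Injective (ι (Qn n)) := by
  letI : Invertible (2 : ℝ) := invertibleOfNonzero two_ne_zero
  intro v w h
  have key : ∀ u : Fin n → ℝ, (equivExterior (Qn n)) (ι (Qn n) u) = ExteriorAlgebra.ι ℝ u :=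
    fun u => changeForm_ι changeForm.associated_neg_proof u
  have h2 := congrArg (equivExterior (Qn n)) h
  rw [key, key] at h2
  exact (ExteriorAlgebra.ι_inj ℝ v w).mp h2

end SpunAux
namespace SpunAux
variable {d : ℕ}

/-- extension of a vector in ℝ^d to ℝ^(d+1) by zero (matches `X.iK d d`) -/
def ext (d : ℕ) (v : Fin d → ℝ) : Fin (d + 1) → ℝ :=
  fun j : Fin (d + 1) => if h : (j : ℕ) < d then v ⟨j, h⟩ else 0

lemma ext_add (v w : Fin d → ℝ) : ext d (v + w) = ext d v + ext d w := by
  funext j; simp only [ext, Pi.add_apply]; split <;> simp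

lemma ext_smul (c : ℝ) (v : Fin d → ℝ) : ext d (c • v) = c • ext d v := by
  funext j; simp only [ext, Pi.smul_apply]; split <;> simp

lemma ext_neg (v : Fin d → ℝ) : ext d (-v) = -ext d v := by
  funext j; simp only [ext, Pi.neg_apply]; split <;> simp

lemma ext_sub (v w : Fin d → ℝ) : ext d (v - w) = ext d v - ext d w := by
  funext j; simp only [ext, Pi.sub_apply]; split <;> simp

lemma ext_inj {v w : Fin d → ℝ} (h : ext d v = ext d w) : v = w := by
  funext j
  have := congrFun h (Fin.castSucc j)
  simpa [ext, j.isLt] using this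

/-- embedded vector in Cl_{d+1} -/
def iV (d : ℕ) (v : Fin d → ℝ) : Cl (d + 1) := ι (Qn (d + 1)) (ext d v)

lemma iV_inj {v w : Fin d → ℝ} (h : iV d v = iV d w) : v = w :=
  ext_inj (iota_injective h)

lemma iV_add (v w : Fin d → ℝ) : iV d (v + w) = iV d v + iV d w := by
  rw [iV, iV, iV, ext_add, map_add]

lemma iV_smul (c : ℝ) (v : Fin d → ℝ) : iV d (c • v) = c • iV d v := by
  rw [iV, iV, ext_smul, map_smul]

lemma iV_neg (v : Fin d → ℝ) : iV d (-v) = -iV d v := by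
  rw [iV, iV, ext_neg, map_neg]

lemma iV_sub (v w : Fin d → ℝ) : iV d (v - w) = iV d v - iV d w := by
  rw [iV, iV, iV, ext_sub, map_sub]

/-- the last generator -/
def gL (d : ℕ) : Cl (d + 1) := gC (d + 1) (Fin.last d)

lemma gL_sq : gL d * gL d = -1 := g_sq _

lemma gL_anti_iV (v : Fin d → ℝ) : gL d * iV d v = -(iV d v * gL d) := by
  refine iota_anti fun i => ?_
  rcases eq_or_ne i (Fin.last d) with rfl | hi
  · simp [ext]
  · rw [Pi.single_eq_of_ne hi, zero_mul]

lemma gL_iV_gL (v : Fin d → ℝ) : gL d * iV d v * gL d = iV d v := by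
  rw [gL_anti_iV, neg_mul, mul_assoc, gL_sq, mul_neg, mul_one, neg_neg]

lemma conjC_iV (v : Fin d → ℝ) : conjC (d + 1) (iV d v) = -iV d v := conjC_iota _

lemma conjC_gL : conjC (d + 1) (gL d) = -gL d := conjC_g _

lemma iV_mem_E1 (v : Fin d → ℝ) : iV d v ∈ Epart (d + 1) d 1 := by
  have hv : ext d v = ∑ j : Fin d, v j • (Pi.single (Fin.castSucc j) 1 : Fin (d+1) → ℝ) := by
    funext i
    rw [Finset.sum_apply]
    by_cases hi : (i : ℕ) < d
    · rw [Finset.sum_eq_single (⟨(i : ℕ), hi⟩ : Fin d)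
        (fun b _ hb => by
          rw [Pi.smul_apply, Pi.single_eq_of_ne (fun hc => hb (by
            apply Fin.ext
            simpa using (congrArg Fin.val hc).symm)), smul_zero])
        (fun h => absurd (Finset.mem_univ _) h)]
      have hieq : i = Fin.castSucc (⟨(i : ℕ), hi⟩ : Fin d) := by apply Fin.ext; simp
      rw [Pi.smul_apply, Pi.single_apply, if_pos hieq, smul_eq_mul, mul_one]
      simp [ext, dif_pos hi]
    · rw [Finset.sum_eq_zero (fun b _ => by
        rw [Pi.smul_apply, Pi.single_eq_of_ne (fun hc => hi (by
          rw [hc]; simpa using b.isLt)), smul_zero])]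
      simp [ext, hi]
  rw [iV, hv, map_sum]
  refine sum_mem fun j _ => ?_
  rw [map_smul]
  refine Submodule.smul_mem _ _ (Submodule.subset_span ⟨{Fin.castSucc j}, ?_, by simp, by simp [gC]⟩)
  intro i hi
  rw [Finset.mem_singleton] at hi
  subst hi
  simp [Fin.castSucc]

lemma gL_comm_list : ∀ (l : List (Fin (d+1))), (∀ j ∈ l, (j : ℕ) < d) →
    gL d * prodL (d+1) l = ((-1 : ℝ) ^ l.length) • (prodL (d+1) l * gL d) := by
  intro l
  induction l with
  | nil => simp
  | cons a l ih =>
    intro hb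
    have ha : (a : ℕ) < d := hb a (List.mem_cons_self)
    have hne : Fin.last d ≠ a := by
      intro h; rw [← h] at ha; simp [Fin.last] at ha
    rw [prodL_cons, ← mul_assoc, gL, g_anti hne, ← gL, neg_mul, mul_assoc,
      ih (fun j hj => hb j (List.mem_cons_of_mem _ hj))]
    rw [List.length_cons, pow_succ, mul_comm ((-1:ℝ)^l.length) (-1), mul_smul]
    rw [mul_smul_comm, ← mul_assoc]
    simp [neg_smul]

lemma gL_comm_E0 {x : Cl (d+1)} (hx : x ∈ Epart (d+1) d 0) : gL d * x = x * gL d := by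
  induction hx using Submodule.span_induction with
  | zero => simp
  | add a b _ _ ha hb => rw [mul_add, add_mul, ha, hb]
  | smul c a _ ha => rw [mul_smul_comm, smul_mul_assoc, ha]
  | mem a hmem =>
    obtain ⟨s, hsb, hsp, rfl⟩ := hmem
    have := gL_comm_list (s.sort (· ≤ ·)) (fun j hj => hsb j (Finset.mem_sort _ |>.mp hj))
    rw [sprodC_eq_prodL, this, Finset.length_sort, Even.neg_one_pow, one_smul]
    exact Nat.even_iff.mpr hsp

lemma gL_anti_E1 {x : Cl (d+1)} (hx : x ∈ Epart (d+1) d 1) : gL d * x = -(x * gL d) := by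
  induction hx using Submodule.span_induction with
  | zero => simp
  | add a b _ _ ha hb => rw [mul_add, add_mul, ha, hb, neg_add]
  | smul c a _ ha => rw [mul_smul_comm, smul_mul_assoc, ha, smul_neg]
  | mem a hmem =>
    obtain ⟨s, hsb, hsp, rfl⟩ := hmem
    have := gL_comm_list (s.sort (· ≤ ·)) (fun j hj => hsb j (Finset.mem_sort _ |>.mp hj))
    rw [sprodC_eq_prodL, this, Finset.length_sort, Odd.neg_one_pow, neg_one_smul]
    exact Nat.odd_iff.mpr hsp

end SpunAux
namespace SpunAux
open TrivSqZeroExt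

variable {d : ℕ}

/-- component extraction simp set -/
lemma fst_mul' (x y : Xa d) : (x * y).fst = x.fst * y.fst := fst_mul x y
lemma snd_mul' (x y : Xa d) : (x * y).snd = x.fst * y.snd + x.snd * y.fst := by
  rw [snd_mul, smul_eq_mul, op_smul_eq_mul]

lemma conj_fst (x : Xa d) : (X.conj d x).fst = conjC (d + 1) x.fst := by
  simp [X.conj, fst_add, fst_inl, fst_inr, add_zero]

lemma conj_snd (x : Xa d) : (X.conj d x).snd = conjC (d + 1) x.snd := by
  simp [X.conj, snd_add, snd_inl, snd_inr, zero_add]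

lemma fstL_exists : ∃ f : Xa d →ₗ[ℝ] Cl (d + 1), ∀ x, f x = x.fst :=
  ⟨{ toFun := fst, map_add' := fst_add, map_smul' := fst_smul }, fun _ => rfl⟩

def fstL (d : ℕ) : Xa d →ₗ[ℝ] Cl (d + 1) :=
  { toFun := fst, map_add' := fst_add, map_smul' := fst_smul }

def sndL (d : ℕ) : Xa d →ₗ[ℝ] Cl (d + 1) :=
  { toFun := snd, map_add' := snd_add, map_smul' := snd_smul }

def inlL (d : ℕ) : Cl (d + 1) →ₗ[ℝ] Xa d :=
  { toFun := inl, map_add' := inl_add _, map_smul' := fun c x => inl_smul _ c x }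

def inrgL (d : ℕ) : Cl (d + 1) →ₗ[ℝ] Xa d :=
  { toFun := fun y => inr (y * gL d),
    map_add' := fun a b => by show inr ((a + b) * gL d) = _; rw [add_mul, inr_add],
    map_smul' := fun c a => by
      show inr ((c • a) * gL d) = c • inr (a * gL d)
      rw [smul_mul_assoc, inr_smul] }

lemma fstL_apply (z : Xa d) : fstL d z = z.fst := rfl
lemma sndL_apply (z : Xa d) : sndL d z = z.snd := rfl
lemma inlL_apply (z : Cl (d + 1)) : inlL d z = inl z := rfl
lemma inrgL_apply (z : Cl (d + 1)) : inrgL d z = inr (z * gL d) := rfl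

lemma list_prod_map_inl (l : List (Fin (d + 1))) :
    ((l.map (X.e d)).prod : Xa d) = inl (prodL (d + 1) l) := by
  induction l with
  | nil => simp [prodL]
  | cons a l ih => rw [List.map_cons, List.prod_cons, ih, prodL_cons, X.e, inl_mul_inl]

lemma sprod_e_eq (s : Finset (Fin (d + 1))) :
    X.sprod d (X.e d) s = inl (sprodC (d + 1) s) :=
  list_prod_map_inl _

lemma sprod_zgen_not_last {s : Finset (Fin (d + 1))} (h : Fin.last d ∉ s) :
    X.sprod d (X.zgen d) s = inl (sprodC (d + 1) s) := by
  rw [X.sprod, show (s.sort (· ≤ ·)).map (X.zgen d) = (s.sort (· ≤ ·)).map (X.e d) from ?_,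
    ← X.sprod, sprod_e_eq]
  apply List.map_congr_left
  intro j hj
  have hjs : j ∈ s := (Finset.mem_sort _).mp hj
  have : (j : ℕ) < d := Fin.val_lt_last (fun hc => h (hc ▸ hjs))
  rw [X.zgen, if_pos this]

lemma sort_insert_max {a : Fin (d + 1)} {s : Finset (Fin (d + 1))}
    (h1 : ∀ b ∈ s, b ≤ a) (h2 : a ∉ s) :
    (insert a s).sort (· ≤ ·) = s.sort (· ≤ ·) ++ [a] := by
  refine (fun hp hs => List.Perm.eq_of_pairwise' (Finset.pairwise_sort _ _) hs hp) ?_ ?_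
  · refine ((Finset.sort_perm_toList _ _).trans ((Finset.toList_insert h2).trans ?_)).trans
      (List.perm_append_singleton a _).symm
    exact List.Perm.cons a (Finset.sort_perm_toList s _).symm
  · rw [List.pairwise_append]
    refine ⟨Finset.pairwise_sort _ _, List.pairwise_singleton _ a, ?_⟩
    intro x hx y hy
    rw [List.mem_singleton] at hy
    subst hy
    exact h1 x ((Finset.mem_sort _).mp hx)

lemma eps_eq : X.eps d = (inr 1 : Xa d) := rfl

lemma eL_eq : X.eL d = (inl (gL d) : Xa d) := rfl

lemma eL_mul_eps : X.eL d * X.eps d = inr (gL d) := by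
  rw [eL_eq, eps_eq, inl_mul_inr, smul_eq_mul, mul_one]

lemma sprod_zgen_last {s : Finset (Fin (d + 1))} (hs : Fin.last d ∈ s) :
    X.sprod d (X.zgen d) s = inr (sprodC (d + 1) (s.erase (Fin.last d)) * gL d) := by
  have hsort : s.sort (· ≤ ·) = (s.erase (Fin.last d)).sort (· ≤ ·) ++ [Fin.last d] := by
    conv_lhs => rw [← Finset.insert_erase hs]
    exact sort_insert_max (fun b _ => Fin.le_last b) (Finset.notMem_erase _ _)
  rw [X.sprod, hsort, List.map_append, List.prod_append]
  have h1 : ((s.erase (Fin.last d)).sort (· ≤ ·)).map (X.zgen d) =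
      ((s.erase (Fin.last d)).sort (· ≤ ·)).map (X.e d) := by
    apply List.map_congr_left
    intro j hj
    have hjs : j ∈ s.erase (Fin.last d) := (Finset.mem_sort _).mp hj
    have : (j : ℕ) < d := Fin.val_lt_last (Finset.mem_erase.mp hjs).1
    rw [X.zgen, if_pos this]
  have h2 : X.zgen d (Fin.last d) = X.eL d * X.eps d := by
    rw [X.zgen, if_neg (by simp [Fin.last])]
  have h3 : (((s.erase (Fin.last d)).sort (· ≤ ·)).map (X.e d)).prod
      = (inl (sprodC (d + 1) (s.erase (Fin.last d))) : Xa d) := sprod_e_eq _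
  rw [h1, h3, List.map_singleton, List.prod_singleton, h2, eL_mul_eps, inl_mul_inr, smul_eq_mul]

lemma Z0_struct {z : Xa d} (hz : z ∈ X.Z0 d) :
    z.fst ∈ Epart (d + 1) d 0 ∧
    z.snd ∈ (Epart (d + 1) d 1).map (LinearMap.mulRight ℝ (gL d)) := by
  have hle : X.Z0 d ≤
      (Epart (d + 1) d 0).comap (fstL d) ⊓
      ((Epart (d + 1) d 1).map (LinearMap.mulRight ℝ (gL d))).comap (sndL d) := by
    rw [X.Z0, Submodule.span_le]
    rintro x ⟨s, hsev, rfl⟩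
    rw [SetLike.mem_coe, Submodule.mem_inf, Submodule.mem_comap, Submodule.mem_comap,
      fstL_apply, sndL_apply]
    by_cases hlast : Fin.last d ∈ s
    · rw [sprod_zgen_last hlast, fst_inr, snd_inr]
      refine ⟨zero_mem _, ?_⟩
      refine ⟨sprodC (d + 1) (s.erase (Fin.last d)), Submodule.subset_span ⟨_, ?_, ?_, rfl⟩, rfl⟩
      · exact fun j hj => Fin.val_lt_last (Finset.mem_erase.mp hj).1
      · have h1 : 1 ≤ s.card := Finset.card_pos.mpr ⟨_, hlast⟩
        rw [Finset.card_erase_of_mem hlast]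
        obtain ⟨k, hk⟩ := hsev
        omega
    · rw [sprod_zgen_not_last hlast, fst_inl, snd_inl]
      refine ⟨Submodule.subset_span ⟨s, ?_, Nat.even_iff.mp hsev, rfl⟩, zero_mem _⟩
      exact fun j hj => Fin.val_lt_last (fun hc => hlast (hc ▸ hj))
  have h12 := hle hz
  rw [Submodule.mem_inf, Submodule.mem_comap, Submodule.mem_comap] at h12
  exact h12

lemma Z0_of {x y : Cl (d + 1)} (hx : x ∈ Epart (d + 1) d 0) (hy : y ∈ Epart (d + 1) d 1) :
    (inl x + inr (y * gL d) : Xa d) ∈ X.Z0 d := by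
  refine add_mem ?_ ?_
  · have hle : Epart (d + 1) d 0 ≤ (X.Z0 d).comap (inlL d) := by
      rw [Epart, Submodule.span_le]
      rintro a ⟨s, hsb, hsp, rfl⟩
      show (inl (sprodC (d + 1) s) : Xa d) ∈ X.Z0 d
      have hlast : Fin.last d ∉ s := fun h => by
        have := hsb _ h; simp [Fin.last] at this
      rw [← sprod_zgen_not_last hlast]
      exact Submodule.subset_span ⟨s, Nat.even_iff.mpr hsp, rfl⟩
    exact hle hx
  · have hle : Epart (d + 1) d 1 ≤ (X.Z0 d).comap (inrgL d) := by
      rw [Epart, Submodule.span_le]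
      rintro a ⟨t, htb, htp, rfl⟩
      show (inr (sprodC (d + 1) t * gL d) : Xa d) ∈ X.Z0 d
      have hlast : Fin.last d ∉ t := fun h => by
        have := htb _ h; simp [Fin.last] at this
      have herase : (insert (Fin.last d) t).erase (Fin.last d) = t :=
        Finset.erase_insert hlast
      rw [← herase, ← sprod_zgen_last (Finset.mem_insert_self _ _)]
      refine Submodule.subset_span ⟨insert (Fin.last d) t, ?_, rfl⟩
      rw [Finset.card_insert_of_notMem hlast]
      exact Nat.even_iff.mpr (by omega)
    exact hle hy

lemma ClE_struct {γ : Xa d} (h : γ ∈ X.ClE d d) :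
    γ.fst ∈ Epart (d + 1) d 0 ∧ γ.snd = 0 := by
  have hle : X.ClE d d ≤
      (Epart (d + 1) d 0).comap (fstL d) ⊓ (⊥ : Submodule ℝ (Cl (d+1))).comap (sndL d) := by
    rw [X.ClE, Submodule.span_le]
    rintro x ⟨s, hsb, hsev, rfl⟩
    rw [SetLike.mem_coe, Submodule.mem_inf, Submodule.mem_comap, Submodule.mem_comap,
      fstL_apply, sndL_apply, sprod_e_eq, fst_inl, snd_inl]
    exact ⟨Submodule.subset_span ⟨s, hsb, Nat.even_iff.mp hsev, rfl⟩, zero_mem _⟩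
  have h12 := hle h
  rw [Submodule.mem_inf, Submodule.mem_comap, Submodule.mem_comap] at h12
  exact ⟨h12.1, by have := h12.2; rwa [sndL_apply, Submodule.mem_bot] at this⟩

lemma ClE_of {x : Cl (d + 1)} (hx : x ∈ Epart (d + 1) d 0) : (inl x : Xa d) ∈ X.ClE d d := by
  have hle : Epart (d + 1) d 0 ≤ (X.ClE d d).comap (inlL d) := by
    rw [Epart, Submodule.span_le]
    rintro a ⟨s, hsb, hsp, rfl⟩
    show (inl (sprodC (d + 1) s) : Xa d) ∈ X.ClE d d
    rw [← sprod_e_eq]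
    exact Submodule.subset_span ⟨s, hsb, Nat.even_iff.mpr hsp, rfl⟩
  exact hle hx

lemma iK_eq (v : Fin d → ℝ) : X.iK d d v = inl (iV d v) := rfl

lemma iMap_eq (v : Fin d → ℝ) : X.iMap d v = inl (iV d v) := rfl

lemma conj_inl (x : Cl (d + 1)) : X.conj d (inl x) = inl (conjC (d + 1) x) := by
  apply TrivSqZeroExt.ext
  · rw [conj_fst, fst_inl, fst_inl]
  · rw [conj_snd, snd_inl, snd_inl]
    simp [conjC_eq, map_zero]

lemma spin_iff {γ : Xa d} : γ ∈ X.Spin d d ↔ ∃ x : Cl (d + 1), γ = inl x ∧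
    x ∈ Epart (d + 1) d 0 ∧ x * conjC (d + 1) x = 1 ∧
    ∀ u : Fin d → ℝ, ∃ w : Fin d → ℝ, x * iV d u * conjC (d + 1) x = iV d w := by
  constructor
  · rintro ⟨hClE, hNm, hAct⟩
    obtain ⟨hE, hsnd0⟩ := ClE_struct hClE
    refine ⟨γ.fst, TrivSqZeroExt.ext rfl (by rw [hsnd0, snd_inl]), hE, ?_, ?_⟩
    · have := congrArg fst hNm
      rw [X.Nm, fst_mul', conj_fst, fst_one] at this
      exact this
    · intro u
      obtain ⟨w, hw⟩ := hAct u
      refine ⟨w, ?_⟩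
      have := congrArg fst hw
      rw [iK_eq, iK_eq, fst_mul', fst_mul', conj_fst, fst_inl, fst_inl] at this
      exact this
  · rintro ⟨x, rfl, hE, hNm, hAct⟩
    refine ⟨ClE_of hE, ?_, ?_⟩
    · rw [X.Nm, conj_inl, inl_mul_inl, hNm]
      rfl
    · intro u
      obtain ⟨w, hw⟩ := hAct u
      refine ⟨w, ?_⟩
      rw [iK_eq, iK_eq, conj_inl, inl_mul_inl, inl_mul_inl, hw]

end SpunAux
namespace SpunAux
open TrivSqZeroExt

variable {d : ℕ}

lemma pair_fst (p q : Cl (d + 1)) : (inl p + inr q : Xa d).fst = p := by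
  rw [fst_add, fst_inl, fst_inr, add_zero]

lemma pair_snd (p q : Cl (d + 1)) : (inl p + inr q : Xa d).snd = q := by
  rw [snd_add, snd_inl, snd_inr, zero_add]

lemma pairmul (p q r s : Cl (d + 1)) :
    (inl p + inr q : Xa d) * (inl r + inr s) = inl (p * r) + inr (p * s + q * r) := by
  apply TrivSqZeroExt.ext
  · rw [fst_mul', pair_fst, pair_fst, pair_fst]
  · rw [snd_mul', pair_fst, pair_fst, pair_snd, pair_snd, pair_snd]

lemma pair_eq_iff {p q r s : Cl (d + 1)} :
    (inl p + inr q : Xa d) = inl r + inr s ↔ p = r ∧ q = s := by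
  constructor
  · intro h
    exact ⟨by have := congrArg fst h; rwa [pair_fst, pair_fst] at this,
      by have := congrArg snd h; rwa [pair_snd, pair_snd] at this⟩
  · rintro ⟨rfl, rfl⟩; rfl

lemma one_pair : (1 : Xa d) = inl 1 + inr 0 := by rw [inr_zero, add_zero]; rfl

lemma conj_pair (p q : Cl (d + 1)) :
    X.conj d (inl p + inr q : Xa d) = inl (conjC (d + 1) p) + inr (conjC (d + 1) q) := by
  rw [X.conj, pair_fst, pair_snd]

lemma z_pair (z : Xa d) : z = inl z.fst + inr z.snd := (inl_fst_add_inr_snd_eq z).symm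

lemma iV_zero : iV d 0 = 0 := by
  have h : ext d (0 : Fin d → ℝ) = 0 := by
    funext j; simp only [ext, Pi.zero_apply]; split <;> rfl
  rw [iV, h, map_zero]

lemma mid_eq (u : Fin d → ℝ) :
    X.eps d * X.iMap d u + X.eL d = (inl (gL d) + inr (iV d u) : Xa d) := by
  have h1 : X.eps d * X.iMap d u = inr (iV d u) := by
    rw [eps_eq, iMap_eq]
    apply TrivSqZeroExt.ext
    · rw [fst_mul', fst_inr, fst_inl, fst_inr, zero_mul]
    · rw [snd_mul', fst_inr, snd_inl, snd_inr, snd_inr, fst_inl, mul_zero, zero_add, one_mul]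
  rw [h1, eL_eq, add_comm]

lemma xi_eq (x : Cl (d + 1)) (v : Fin d → ℝ) :
    (inl x : Xa d) * (1 + X.eL d * X.eps d * X.iMap d v)
      = inl x + inr (x * (gL d * iV d v)) := by
  have h1 : X.eL d * X.eps d * X.iMap d v = inr (gL d * iV d v) := by
    rw [eL_mul_eps, iMap_eq]
    apply TrivSqZeroExt.ext
    · rw [fst_mul', fst_inr, fst_inl, fst_inr, zero_mul]
    · rw [snd_mul', fst_inr, snd_inr, snd_inr, fst_inl, snd_inl, mul_zero, zero_add]
  rw [h1, mul_add, mul_one, inl_mul_inr, smul_eq_mul]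

lemma conj_act_surj {x : Cl (d + 1)} (hNm : x * conjC (d + 1) x = 1)
    (hNm' : conjC (d + 1) x * x = 1)
    (hAct : ∀ u : Fin d → ℝ, ∃ w, x * iV d u * conjC (d + 1) x = iV d w) :
    ∀ w : Fin d → ℝ, ∃ u, x * iV d u * conjC (d + 1) x = iV d w := by
  classical
  set cx := conjC (d + 1) x with hcx
  choose φ hφ using hAct
  have hadd : ∀ a b, φ (a + b) = φ a + φ b := fun a b => iV_inj (by
    rw [← hφ (a + b), iV_add, iV_add, mul_add, add_mul, hφ a, hφ b])
  have hsmul : ∀ (c : ℝ) (a : Fin d → ℝ), φ (c • a) = c • φ a := fun c a => iV_inj (by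
    rw [← hφ (c • a), iV_smul, iV_smul, mul_smul_comm, smul_mul_assoc, hφ a])
  have hkey : ∀ t : Cl (d + 1), cx * (x * t * cx) * x = t := by
    intro t
    simp only [← mul_assoc, hNm', one_mul]
    rw [mul_assoc, hNm', mul_one]
  have hinj : Function.Injective φ := by
    intro a b hab
    have h1 : x * iV d a * cx = x * iV d b * cx := by rw [hφ a, hφ b, hab]
    have h2 : iV d a = iV d b := by
      have := congrArg (fun t => cx * t * x) h1
      simpa only [hkey] using this
    exact iV_inj h2
  have hsurj : Function.Surjective
      ({ toFun := φ, map_add' := hadd, map_smul' := hsmul } :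
        (Fin d → ℝ) →ₗ[ℝ] (Fin d → ℝ)) :=
    LinearMap.surjective_of_injective hinj
  intro w
  obtain ⟨u, hu⟩ := hsurj w
  exact ⟨u, by rw [hφ u]; exact congrArg (iV d) hu⟩

lemma spun_of {x : Cl (d + 1)} (hxE : x ∈ Epart (d + 1) d 0)
    (hNm : x * conjC (d + 1) x = 1)
    (hAct : ∀ u : Fin d → ℝ, ∃ w, x * iV d u * conjC (d + 1) x = iV d w)
    (v : Fin d → ℝ) :
    ((inl x : Xa d) * (1 + X.eL d * X.eps d * X.iMap d v)) ∈ X.Spun d := by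
  set cx := conjC (d + 1) x with hcx
  have hcxE : cx ∈ Epart (d + 1) d 0 := conjC_Epart hxE
  have h1 : gL d * x = x * gL d := gL_comm_E0 hxE
  have h2 : gL d * cx = cx * gL d := gL_comm_E0 hcxE
  have h3 : ∀ u : Fin d → ℝ, gL d * iV d u = -(iV d u * gL d) := gL_anti_iV
  have h4 : gL d * gL d = -1 := gL_sq
  have hq : conjC (d + 1) (x * (gL d * iV d v)) = iV d v * gL d * cx := by
    rw [conjC_mul, conjC_mul, conjC_iV, conjC_gL, ← hcx]
    noncomm_ring
  rw [xi_eq]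
  refine ⟨?_, ?_, ?_⟩
  · have hform : x * (gL d * iV d v) = (-(x * iV d v)) * gL d := by
      linear_combination (norm := noncomm_ring) x * h3 v
    rw [hform]
    have hx1 : x * iV d v ∈ Epart (d + 1) d (1 % 2) := Epart_mul hxE (iV_mem_E1 v) 1 rfl
    exact Z0_of hxE (neg_mem hx1)
  · show (inl x + inr (x * (gL d * iV d v))) * X.conj d _ = 1
    rw [conj_pair, ← hcx, hq, pairmul, one_pair, pair_eq_iff]
    refine ⟨hNm, ?_⟩
    linear_combination (norm := noncomm_ring) x * (h3 v) * cx
  · intro u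
    obtain ⟨w, hw⟩ := hAct (u + v + v)
    rw [iV_add, iV_add] at hw
    refine ⟨w, ?_⟩
    rw [mid_eq u, mid_eq w, conj_pair, ← hcx, hq, pairmul, pairmul, pair_eq_iff]
    constructor
    · linear_combination (norm := noncomm_ring) (gL d) * hNm - h1 * cx
    · linear_combination (norm := noncomm_ring) hw + x * (h3 v) * (gL d * cx)
        + x * (h3 v) * (gL d * cx) - (x * iV d v) * h4 * cx - (x * iV d v) * h4 * cx

lemma spun_decomp {z : Xa d} (hz : z ∈ X.Spun d) :
    ∃ (x : Cl (d + 1)) (v : Fin d → ℝ), (inl x : Xa d) ∈ X.Spin d d ∧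
      z = inl x * (1 + X.eL d * X.eps d * X.iMap d v) := by
  obtain ⟨hZ0, hNm, hAct⟩ := hz
  obtain ⟨hxE, hsndmem⟩ := Z0_struct hZ0
  obtain ⟨y, hyE, hy⟩ := hsndmem
  rw [LinearMap.mulRight_apply] at hy
  set x := z.fst with hxdef
  set cx := conjC (d + 1) x with hcx
  set cy := conjC (d + 1) y with hcyd
  have hcyE : cy ∈ Epart (d + 1) d 1 := conjC_Epart hyE
  have hcxE : cx ∈ Epart (d + 1) d 0 := conjC_Epart hxE
  have h1 : gL d * x = x * gL d := gL_comm_E0 hxE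
  have h2 : gL d * cx = cx * gL d := gL_comm_E0 hcxE
  have h6 : gL d * cy = -(cy * gL d) := gL_anti_E1 hcyE
  have h3 : ∀ u : Fin d → ℝ, gL d * iV d u = -(iV d u * gL d) := gL_anti_iV
  have h4 : gL d * gL d = -1 := gL_sq
  have hzpair : z = inl x + inr (y * gL d) := by
    rw [hy]; exact z_pair z
  have hcyg : conjC (d + 1) (y * gL d) = -(gL d * cy) := by
    rw [conjC_mul, conjC_gL, ← hcyd]; noncomm_ring
  -- norm equation
  have hNmz : z * X.conj d z = 1 := hNm
  rw [hzpair, conj_pair, ← hcx, hcyg, pairmul, one_pair, pair_eq_iff] at hNmz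
  obtain ⟨hNm1, hNm2⟩ := hNmz
  -- key anti-relation
  have hk : x * cy = -(y * cx) := by
    linear_combination (norm := noncomm_ring)
      -(hNm2 * gL d) - x * h6 * gL d + y * h2 * gL d + (x * cy) * h4 + (y * cx) * h4
  -- action equations
  choose W hW using hAct
  have hS : ∀ u : Fin d → ℝ, x * cy + x * iV d u * cx - y * cx = iV d (W u) := by
    intro u
    have hWu := hW u
    rw [hzpair, mid_eq, mid_eq, conj_pair, ← hcx, hcyg, pairmul, pairmul,
      pair_eq_iff] at hWu
    obtain ⟨hfstu, hsndu⟩ := hWu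
    linear_combination (norm := noncomm_ring) hsndu + x * h4 * cy - y * h4 * cx
  have hS0 : x * cy - y * cx = iV d (W 0) := by
    have := hS 0
    rw [iV_zero, mul_zero, zero_mul] at this
    linear_combination (norm := noncomm_ring) this
  have hvu : ∀ u : Fin d → ℝ, x * iV d u * cx = iV d (W u - W 0) := by
    intro u
    rw [iV_sub]
    linear_combination (norm := noncomm_ring) hS u - hS0
  have hNm1' : cx * x = 1 := mul_eq_one_comm' hNm1
  have hActs : ∀ u : Fin d → ℝ, ∃ w, x * iV d u * cx = iV d w :=
    fun u => ⟨W u - W 0, hvu u⟩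
  -- solve for y
  have h2a : iV d (W 0) = -((2 : ℝ) • (y * cx)) := by
    rw [← hS0, hk, two_smul]; abel
  have hv1 : y * cx = iV d ((-(2 : ℝ)⁻¹) • W 0) := by
    rw [iV_smul, h2a, smul_neg, smul_smul]
    norm_num
  obtain ⟨v2, hv2⟩ := conj_act_surj hNm1 hNm1' hActs ((-(2 : ℝ)⁻¹) • W 0)
  rw [← hcx, ← hv1] at hv2
  have hyx : y = x * iV d v2 := by
    linear_combination (norm := noncomm_ring)
      (x * iV d v2) * hNm1' - hv2 * x - y * hNm1'
  refine ⟨x, -v2, spin_iff.mpr ⟨x, rfl, hxE, hNm1, hActs⟩, ?_⟩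
  rw [xi_eq, hzpair]
  congr 1
  rw [iV_neg]
  apply congrArg
  linear_combination (norm := noncomm_ring) x * h3 v2 + hyx * gL d

lemma translation_inj {x x' : Cl (d + 1)} {v v' : Fin d → ℝ}
    (hNm : x * conjC (d + 1) x = 1)
    (h : (inl x : Xa d) * (1 + X.eL d * X.eps d * X.iMap d v)
       = inl x' * (1 + X.eL d * X.eps d * X.iMap d v')) :
    x = x' ∧ v = v' := by
  rw [xi_eq, xi_eq] at h
  obtain ⟨hx, hsnd⟩ := pair_eq_iff.mp h
  subst hx
  refine ⟨rfl, ?_⟩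
  have hNm' : conjC (d + 1) x * x = 1 := mul_eq_one_comm' hNm
  have h2 : gL d * iV d v = gL d * iV d v' := by
    have h3 := congrArg (fun t => conjC (d + 1) x * t) hsnd
    simpa only [← mul_assoc, hNm', one_mul] using h3
  have h3 : iV d v = iV d v' := by
    have h4 := congrArg (fun t => gL d * t) h2
    simp only [← mul_assoc, gL_sq, neg_one_mul, neg_inj] at h4
    exact h4
  exact iV_inj h3

end SpunAux


/-- `Spun(d) = {γ·(1 + e_{d+1}e_{d+2}·i(v)) : γ ∈ Spin(d), v ∈ ℝ^d}`,
and every element of `Spun(d)` corresponds to a unique pair `(γ, v) ∈ Spin(d) × ℝ^d`. -/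
theorem spun_eq_spin_translations (d : ℕ) :
    X.Spun d = {x | ∃ γ ∈ X.Spin d d, ∃ v : Fin d → ℝ,
        x = γ * (1 + X.eL d * X.eps d * X.iMap d v)} ∧
    ∀ γ ∈ X.Spin d d, ∀ γ' ∈ X.Spin d d, ∀ v v' : Fin d → ℝ,
      γ * (1 + X.eL d * X.eps d * X.iMap d v) = γ' * (1 + X.eL d * X.eps d * X.iMap d v') →
        γ = γ' ∧ v = v' := by
  constructor
  · apply Set.eq_of_subset_of_subset
    · intro z hz
      obtain ⟨x, v, hspin, hzeq⟩ := SpunAux.spun_decomp hz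
      exact ⟨TrivSqZeroExt.inl x, hspin, v, hzeq⟩
    · rintro z ⟨γ, hγ, v, rfl⟩
      obtain ⟨x, rfl, hxE, hNm, hAct⟩ := SpunAux.spin_iff.mp hγ
      exact SpunAux.spun_of hxE hNm hAct v
  · intro γ hγ γ' hγ' v v' heq
    obtain ⟨x, rfl, hxE, hNm, hAct⟩ := SpunAux.spin_iff.mp hγ
    obtain ⟨x', rfl, hxE', hNm', hAct'⟩ := SpunAux.spin_iff.mp hγ'
    obtain ⟨hx, hv⟩ := SpunAux.translation_inj hNm heq
    exact ⟨by rw [hx], hv⟩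
end
end

section
/- For any a, p ∈ ℝ^d, the set T_{ap} of elements of Spun(d) whose associated rigid motion takes a to p satisfies T_{ap} = {γ + ½·e_{d+1}e_{d+2}·(i(p)γ − γ·i(a)) : γ ∈ Spin(d)}. -/
noncomputable section

open CliffordAlgebra

section AuxBasic

open CliffordAlgebra

namespace ClAux

variable {n : ℕ}

lemma Qn_apply (v : Fin n → ℝ) : Qn n v = -∑ i, v i * v i := by
  simp [Qn, QuadraticMap.weightedSumSquares_apply, smul_eq_mul, neg_mul,
    Finset.sum_neg_distrib]

lemma iota_anticomm {u v : Fin n → ℝ} (h : ∑ i, u i * v i = 0) :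
    ι (Qn n) u * ι (Qn n) v = -(ι (Qn n) v * ι (Qn n) u) := by
  refine ι_mul_ι_comm_of_isOrtho ?_
  show Qn n (u + v) = Qn n u + Qn n v
  simp only [Qn_apply, Pi.add_apply]
  have h2 : ∑ i, (u i + v i) * (u i + v i)
      = (∑ i, u i * u i) + (∑ i, v i * v i) + 2 * ∑ i, u i * v i := by
    rw [Finset.mul_sum, ← Finset.sum_add_distrib, ← Finset.sum_add_distrib]
    exact Finset.sum_congr rfl fun i _ => by ring
  rw [h2, h]; ring

lemma gC_mul_self (j : Fin n) : gC n j * gC n j = -1 := by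
  rw [gC, ι_sq_scalar]
  have hq : Qn n (Pi.single j 1) = -1 := by
    rw [Qn_apply]
    have : ∀ i, Pi.single (M := fun _ : Fin n => ℝ) j 1 i * Pi.single (M := fun _ : Fin n => ℝ) j 1 i
        = if i = j then 1 else 0 := by
      intro i; simp [Pi.single_apply]
    simp [this]
  rw [hq, map_neg, map_one]

lemma gC_anticomm {j k : Fin n} (h : j ≠ k) : gC n j * gC n k = -(gC n k * gC n j) := by
  refine iota_anticomm ?_
  have : ∀ i, Pi.single (M := fun _ : Fin n => ℝ) j 1 i * Pi.single (M := fun _ : Fin n => ℝ) k 1 i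
      = 0 := by
    intro i
    rcases eq_or_ne i j with rfl | hij
    · simp [Pi.single_apply, h.symm]
    · simp [Pi.single_apply, hij]
  simp [this]

lemma conjC_mul (x y : Cl n) : conjC n (x * y) = conjC n y * conjC n x := by
  simp [conjC, map_mul]

@[simp] lemma conjC_one : conjC n 1 = 1 := by simp [conjC]

lemma conjC_add (x y : Cl n) : conjC n (x + y) = conjC n x + conjC n y := by
  simp [conjC, map_add]

lemma conjC_sub (x y : Cl n) : conjC n (x - y) = conjC n x - conjC n y := by
  simp [conjC, map_sub]

lemma conjC_neg (x : Cl n) : conjC n (-x) = -conjC n x := by simp [conjC, map_neg]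

lemma conjC_smul (r : ℝ) (x : Cl n) : conjC n (r • x) = r • conjC n x := by
  simp [conjC, map_smul]

@[simp] lemma conjC_zero : conjC n 0 = 0 := by simp [conjC]

lemma conjC_iota (v : Fin n → ℝ) : conjC n (ι (Qn n) v) = -(ι (Qn n) v) := by
  simp [conjC, involute_ι, map_neg, reverse_ι]

end ClAux

end AuxBasic
section AuxMonomial

open CliffordAlgebra

namespace ClAux

variable {n : ℕ}

def lprod (n : ℕ) (l : List (Fin n)) : Cl n := (l.map (gC n)).prod

@[simp] lemma lprod_nil : lprod n [] = 1 := rfl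

@[simp] lemma lprod_cons (j : Fin n) (l : List (Fin n)) :
    lprod n (j :: l) = gC n j * lprod n l := by simp [lprod]

lemma lprod_append (l₁ l₂ : List (Fin n)) :
    lprod n (l₁ ++ l₂) = lprod n l₁ * lprod n l₂ := by simp [lprod]

lemma sprodC_eq (s : Finset (Fin n)) : sprodC n s = lprod n (s.sort (· ≤ ·)) := rfl

lemma gC_mul_lprod_of_not_mem {j : Fin n} :
    ∀ {l : List (Fin n)}, j ∉ l →
      gC n j * lprod n l = ((-1 : ℝ) ^ l.length) • (lprod n l * gC n j)
  | [], _ => by simp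
  | k :: t, h => by
    have hjk : j ≠ k := fun hh => h (hh ▸ List.mem_cons_self)
    have ht : j ∉ t := fun hh => h (List.mem_cons_of_mem _ hh)
    rw [lprod_cons, ← mul_assoc, gC_anticomm hjk, neg_mul, mul_assoc,
      gC_mul_lprod_of_not_mem ht]
    rw [List.length_cons, pow_succ]
    rw [mul_smul_comm]
    rw [← neg_smul]
    congr 1
    · ring
    · rw [mul_assoc]

lemma gC_mul_lprod_sorted (j : Fin n) :
    ∀ (l : List (Fin n)), l.Pairwise (· < ·) →
      ∃ (ε : ℝ) (m : List (Fin n)), (ε = 1 ∨ ε = -1) ∧ m.Pairwise (· < ·) ∧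
        (∀ i ∈ m, i = j ∨ i ∈ l) ∧ (Even m.length ↔ ¬ Even l.length) ∧
        gC n j * lprod n l = ε • lprod n m := by
  intro l
  induction l with
  | nil =>
    intro _
    exact ⟨1, [j], Or.inl rfl, List.pairwise_singleton _ j, by simp, by simp [Nat.even_add_one], by simp⟩
  | cons k t ih =>
    intro hs
    have hkt : ∀ i ∈ t, k < i := (List.pairwise_cons.mp hs).1
    have hts : t.Pairwise (· < ·) := (List.pairwise_cons.mp hs).2
    rcases lt_trichotomy j k with hlt | heq | hgt
    · refine ⟨1, j :: k :: t, Or.inl rfl, ?_, ?_, ?_, by simp⟩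
      · refine List.pairwise_cons.mpr ⟨?_, hs⟩
        intro b hb
        rcases List.mem_cons.mp hb with rfl | hb'
        · exact hlt
        · exact hlt.trans (hkt b hb')
      · intro i hi
        rcases List.mem_cons.mp hi with rfl | hi'
        · exact Or.inl rfl
        · exact Or.inr hi'
      · simp [Nat.even_add_one]
    · subst heq
      refine ⟨-1, t, Or.inr rfl, hts, fun i hi => Or.inr (List.mem_cons_of_mem _ hi), ?_, ?_⟩
      · simp [Nat.even_add_one]
      · rw [lprod_cons, ← mul_assoc, gC_mul_self, neg_one_mul, neg_one_smul]
    · obtain ⟨ε, m, hε, hm, hmem, hpar, hprod⟩ := ih hts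
      refine ⟨-ε, k :: m, ?_, ?_, ?_, ?_, ?_⟩
      · rcases hε with rfl | rfl
        · exact Or.inr rfl
        · exact Or.inl (by norm_num)
      · refine List.pairwise_cons.mpr ⟨?_, hm⟩
        intro b hb
        rcases hmem b hb with rfl | hb'
        · exact hgt
        · exact hkt b hb'
      · intro i hi
        rcases List.mem_cons.mp hi with rfl | hi'
        · exact Or.inr (List.mem_cons_self)
        · rcases hmem i hi' with rfl | h'
          · exact Or.inl rfl
          · exact Or.inr (List.mem_cons_of_mem _ h')
      · simp only [List.length_cons, Nat.even_add_one] at hpar ⊢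
        tauto
      · have hjk : j ≠ k := ne_of_gt hgt
        rw [lprod_cons, ← mul_assoc, gC_anticomm hjk, neg_mul, mul_assoc, hprod,
          mul_smul_comm, ← neg_smul, lprod_cons]

end ClAux

end AuxMonomial
section AuxEOS

open CliffordAlgebra

namespace ClAux

variable {n : ℕ}

/-- Span of the monomials with indices `< k` and parity of the cardinality given by the
proposition `b` (`b` true ↔ even). -/
def EOS (n k : ℕ) (b : Prop) : Submodule ℝ (Cl n) :=
  Submodule.span ℝ
    {x | ∃ s : Finset (Fin n), (∀ j ∈ s, (j : ℕ) < k) ∧ (Even s.card ↔ b) ∧ x = sprodC n s}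

lemma EOS_congr {k : ℕ} {b b' : Prop} (h : b ↔ b') : EOS n k b = EOS n k b' := by
  rw [show b = b' from propext h]

lemma EOS_cast {k : ℕ} {b b' : Prop} (h : b ↔ b') {x : Cl n} (hx : x ∈ EOS n k b) :
    x ∈ EOS n k b' := EOS_congr h ▸ hx

lemma one_mem_EOS {k : ℕ} {b : Prop} (hb : b) : (1 : Cl n) ∈ EOS n k b := by
  refine Submodule.subset_span ⟨∅, by simp, by simpa using hb, ?_⟩
  simp [sprodC_eq, Finset.sort_empty]

lemma gC_mul_mem {k : ℕ} {b : Prop} {j : Fin n} (hj : (j : ℕ) < k) {x : Cl n}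
    (hx : x ∈ EOS n k b) : gC n j * x ∈ EOS n k (¬ b) := by
  induction hx using Submodule.span_induction with
  | mem x h =>
    obtain ⟨s, hsk, hsb, rfl⟩ := h
    obtain ⟨ε, m, hε, hm, hmem, hpar, hprod⟩ :=
      gC_mul_lprod_sorted j (s.sort (· ≤ ·)) (Finset.sortedLT_sort s).pairwise
    rw [sprodC_eq, hprod]
    refine Submodule.smul_mem _ _ (Submodule.subset_span ⟨m.toFinset, ?_, ?_, ?_⟩)
    · intro i hi
      rcases hmem i (List.mem_toFinset.mp hi) with rfl | h'
      · exact hj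
      · exact hsk i (Finset.mem_sort (α := Fin n) (· ≤ ·) |>.mp h')
    · rw [List.toFinset_card_of_nodup hm.nodup]
      rw [Finset.length_sort] at hpar
      rw [hpar, not_iff_not.mpr hsb]
    · rw [sprodC_eq, (List.toFinset_sort (· ≤ ·) hm.nodup).mpr (hm.imp le_of_lt)]
  | zero => simpa using Submodule.zero_mem _
  | add x y hx hy ihx ihy => rw [mul_add]; exact Submodule.add_mem _ ihx ihy
  | smul a x hx ihx => rw [mul_smul_comm]; exact Submodule.smul_mem _ _ ihx

lemma lprod_mul_mem {k : ℕ} {b : Prop} :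
    ∀ (l : List (Fin n)), (∀ j ∈ l, (j : ℕ) < k) →
      ∀ {x : Cl n}, x ∈ EOS n k b → lprod n l * x ∈ EOS n k (Even l.length ↔ b)
  | [], _, x, hx => by
    rw [lprod_nil, one_mul]
    exact EOS_cast (by simp) hx
  | j :: t, hl, x, hx => by
    rw [lprod_cons, mul_assoc]
    have ht : lprod n t * x ∈ EOS n k (Even t.length ↔ b) :=
      lprod_mul_mem t (fun i hi => hl i (List.mem_cons_of_mem _ hi)) hx
    have := gC_mul_mem (hl j (List.mem_cons_self)) ht
    refine EOS_cast ?_ this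
    simp only [List.length_cons, Nat.even_add_one]
    tauto

lemma lprod_mem {k : ℕ} (l : List (Fin n)) (hl : ∀ j ∈ l, (j : ℕ) < k) :
    lprod n l ∈ EOS n k (Even l.length) := by
  have := lprod_mul_mem (b := True) l hl (one_mem_EOS trivial)
  rw [mul_one] at this
  exact EOS_cast (by tauto) this

lemma mul_mem_EOS {k : ℕ} {b b' : Prop} {x y : Cl n}
    (hx : x ∈ EOS n k b) (hy : y ∈ EOS n k b') : x * y ∈ EOS n k (b ↔ b') := by
  induction hx using Submodule.span_induction with
  | mem x h =>
    obtain ⟨s, hsk, hsb, rfl⟩ := h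
    rw [sprodC_eq]
    have := lprod_mul_mem (s.sort (· ≤ ·))
      (fun i hi => hsk i (Finset.mem_sort (α := Fin n) (· ≤ ·) |>.mp hi)) hy
    refine EOS_cast ?_ this
    rw [Finset.length_sort, hsb]
  | zero => simpa using Submodule.zero_mem _
  | add x₁ x₂ h₁ h₂ ih₁ ih₂ => rw [add_mul]; exact Submodule.add_mem _ ih₁ ih₂
  | smul a x₁ h₁ ih => rw [smul_mul_assoc]; exact Submodule.smul_mem _ _ ih

lemma conjC_lprod : ∀ l : List (Fin n),
    conjC n (lprod n l) = ((-1 : ℝ) ^ l.length) • lprod n l.reverse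
  | [] => by simp
  | j :: t => by
    rw [lprod_cons, conjC_mul, conjC_lprod t]
    have : conjC n (gC n j) = -gC n j := conjC_iota _
    rw [this, List.reverse_cons, lprod_append, List.length_cons, pow_succ]
    have h1 : lprod n [j] = gC n j := by simp [lprod]
    rw [h1, smul_mul_assoc, mul_neg, mul_smul, neg_one_smul]

lemma conjC_mem {k : ℕ} {b : Prop} {x : Cl n} (hx : x ∈ EOS n k b) :
    conjC n x ∈ EOS n k b := by
  induction hx using Submodule.span_induction with
  | mem x h =>
    obtain ⟨s, hsk, hsb, rfl⟩ := h
    rw [sprodC_eq, conjC_lprod]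
    refine Submodule.smul_mem _ _ ?_
    have := lprod_mem (k := k) (s.sort (· ≤ ·)).reverse
      (fun i hi => hsk i (Finset.mem_sort (α := Fin n) (· ≤ ·) |>.mp (List.mem_reverse.mp hi)))
    rw [List.length_reverse, Finset.length_sort] at this
    exact EOS_cast hsb this
  | zero => simpa using Submodule.zero_mem _
  | add x₁ x₂ h₁ h₂ ih₁ ih₂ => rw [conjC_add]; exact Submodule.add_mem _ ih₁ ih₂
  | smul a x₁ h₁ ih => rw [conjC_smul]; exact Submodule.smul_mem _ _ ih

lemma iota_eq_sum (v : Fin n → ℝ) : ι (Qn n) v = ∑ j, v j • gC n j := by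
  conv_lhs => rw [← Finset.univ_sum_single v]
  rw [map_sum]
  refine Finset.sum_congr rfl fun j _ => ?_
  rw [gC, ← map_smul]
  congr 1
  ext i
  simp [Pi.single_apply]

lemma gC_mem_odd {k : ℕ} {j : Fin n} (hj : (j : ℕ) < k) : gC n j ∈ EOS n k False := by
  refine Submodule.subset_span ⟨{j}, by simpa using hj, by simp [Nat.even_add_one], ?_⟩
  simp [sprodC_eq, Finset.sort_singleton, lprod]

lemma iota_mem_odd {k : ℕ} {v : Fin n → ℝ} (hv : ∀ j : Fin n, ¬ ((j : ℕ) < k) → v j = 0) :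
    ι (Qn n) v ∈ EOS n k False := by
  rw [iota_eq_sum]
  refine Submodule.sum_mem _ fun j _ => ?_
  by_cases hj : (j : ℕ) < k
  · exact Submodule.smul_mem _ _ (gC_mem_odd hj)
  · rw [hv j hj, zero_smul]; exact Submodule.zero_mem _

lemma gC_comm_of_even {k : ℕ} {j : Fin n} (hj : k ≤ (j : ℕ)) {x : Cl n}
    (hx : x ∈ EOS n k True) : gC n j * x = x * gC n j := by
  induction hx using Submodule.span_induction with
  | mem x h =>
    obtain ⟨s, hsk, hsb, rfl⟩ := h
    have hnot : j ∉ s.sort (· ≤ ·) := fun hh =>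
      absurd (hsk j (Finset.mem_sort (α := Fin n) (· ≤ ·) |>.mp hh)) (not_lt.mpr hj)
    rw [sprodC_eq, gC_mul_lprod_of_not_mem hnot, Finset.length_sort,
      (hsb.mpr trivial).neg_one_pow, one_smul]
  | zero => simp
  | add x₁ x₂ h₁ h₂ ih₁ ih₂ => rw [mul_add, add_mul, ih₁, ih₂]
  | smul a x₁ h₁ ih => rw [mul_smul_comm, smul_mul_assoc, ih]

lemma gC_anticomm_of_odd {k : ℕ} {j : Fin n} (hj : k ≤ (j : ℕ)) {x : Cl n}
    (hx : x ∈ EOS n k False) : gC n j * x = -(x * gC n j) := by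
  induction hx using Submodule.span_induction with
  | mem x h =>
    obtain ⟨s, hsk, hsb, rfl⟩ := h
    have hnot : j ∉ s.sort (· ≤ ·) := fun hh =>
      absurd (hsk j (Finset.mem_sort (α := Fin n) (· ≤ ·) |>.mp hh)) (not_lt.mpr hj)
    have hodd : Odd (s.sort (· ≤ ·)).length := by
      rw [Finset.length_sort, ← Nat.not_even_iff_odd]
      exact fun he => hsb.mp he
    rw [sprodC_eq, gC_mul_lprod_of_not_mem hnot, hodd.neg_one_pow, neg_one_smul]
  | zero => simp
  | add x₁ x₂ h₁ h₂ ih₁ ih₂ => rw [mul_add, add_mul, ih₁, ih₂, neg_add]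
  | smul a x₁ h₁ ih => rw [mul_smul_comm, smul_mul_assoc, ih, smul_neg]

end ClAux

end AuxEOS
section AuxFinite

open CliffordAlgebra

namespace ClAux

variable {n : ℕ}

lemma mem_sup_EOS (x : Cl n) : x ∈ EOS n n True ⊔ EOS n n False := by
  induction x using CliffordAlgebra.induction with
  | algebraMap r =>
    rw [Algebra.algebraMap_eq_smul_one]
    exact Submodule.mem_sup_left (Submodule.smul_mem _ _ (one_mem_EOS trivial))
  | ι v =>
    exact Submodule.mem_sup_right (iota_mem_odd (fun j hj => absurd j.isLt hj))
  | mul a b ha hb =>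
    obtain ⟨a₁, ha₁, a₂, ha₂, rfl⟩ := Submodule.mem_sup.mp ha
    obtain ⟨b₁, hb₁, b₂, hb₂, rfl⟩ := Submodule.mem_sup.mp hb
    have e11 := mul_mem_EOS ha₁ hb₁
    have e12 := mul_mem_EOS ha₁ hb₂
    have e21 := mul_mem_EOS ha₂ hb₁
    have e22 := mul_mem_EOS ha₂ hb₂
    rw [add_mul, mul_add, mul_add]
    refine Submodule.add_mem _ (Submodule.add_mem _ ?_ ?_) (Submodule.add_mem _ ?_ ?_)
    · exact Submodule.mem_sup_left (EOS_cast (by tauto) e11)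
    · exact Submodule.mem_sup_right (EOS_cast (by tauto) e12)
    · exact Submodule.mem_sup_right (EOS_cast (by tauto) e21)
    · exact Submodule.mem_sup_left (EOS_cast (by tauto) e22)
  | add a b ha hb => exact Submodule.add_mem _ ha hb

lemma span_sprodC_top : Submodule.span ℝ (Set.range (sprodC n)) = ⊤ := by
  rw [eq_top_iff]
  intro x _
  have hx := mem_sup_EOS x
  have hle : ∀ b : Prop, EOS n n b ≤ Submodule.span ℝ (Set.range (sprodC n)) := by
    intro b
    refine Submodule.span_le.mpr ?_
    rintro y ⟨s, -, -, rfl⟩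
    exact Submodule.subset_span ⟨s, rfl⟩
  obtain ⟨x₁, h₁, x₂, h₂, rfl⟩ := Submodule.mem_sup.mp hx
  exact Submodule.add_mem _ (hle True h₁) (hle False h₂)

instance Cl_finite : Module.Finite ℝ (Cl n) := by
  rw [Module.finite_def, Submodule.fg_def]
  exact ⟨Set.range (sprodC n), Set.finite_range _, span_sprodC_top⟩

lemma mul_eq_one_symm {x y : Cl n} (h : x * y = 1) : y * x = 1 := by
  have hinj : Function.Injective (LinearMap.mulLeft ℝ y) := by
    intro a b hab
    simp only [LinearMap.mulLeft_apply] at hab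
    have := congrArg (x * ·) hab
    simpa only [← mul_assoc, h, one_mul] using this
  have hsurj := LinearMap.injective_iff_surjective.mp hinj
  obtain ⟨c, hc⟩ := hsurj 1
  simp only [LinearMap.mulLeft_apply] at hc
  have hx : x = c := by
    calc x = x * (y * c) := by rw [hc, mul_one]
    _ = (x * y) * c := by rw [mul_assoc]
    _ = c := by rw [h, one_mul]
  rw [hx, hc]

end ClAux

end AuxFinite
section AuxX

open CliffordAlgebra TrivSqZeroExt ClAux

namespace XAux

variable {d : ℕ}

/-- The last generator of `Cl_{d+1}`. -/
def gLL (d : ℕ) : Cl (d + 1) := gC (d + 1) (Fin.last d)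

lemma inl_list_prod (l : List (Cl (d + 1))) :
    (inl l.prod : Xa d) = (l.map (inl : Cl (d + 1) → Xa d)).prod := by
  have := map_list_prod (inlHom (Cl (d + 1)) (Cl (d + 1))) l
  exact this

lemma sprod_e_eq (s : Finset (Fin (d + 1))) :
    X.sprod d (X.e d) s = inl (sprodC (d + 1) s) := by
  rw [X.sprod, sprodC_eq, lprod, inl_list_prod, List.map_map]
  rfl

lemma zgen_of_lt {j : Fin (d + 1)} (h : (j : ℕ) < d) :
    X.zgen d j = inl (gC (d + 1) j) := by
  rw [X.zgen, if_pos h]; rfl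

lemma zgen_last : X.zgen d (Fin.last d) = inr (gLL d) := by
  rw [X.zgen, if_neg (by simp)]
  show X.eL d * X.eps d = _
  rw [X.eL, X.e, X.eps]
  show inl (gC (d+1) (Fin.last d)) * DualNumber.eps = _
  rw [DualNumber.eps, inl_mul_inr, smul_eq_mul, mul_one]
  rfl

lemma sort_last {s : Finset (Fin (d + 1))} (h : Fin.last d ∈ s) :
    s.sort (· ≤ ·) = (s.erase (Fin.last d)).sort (· ≤ ·) ++ [Fin.last d] := by
  have hnd : ((s.erase (Fin.last d)).sort (· ≤ ·) ++ [Fin.last d]).Nodup := by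
    rw [List.Nodup, List.pairwise_append]
    refine ⟨Finset.sort_nodup _ _, List.nodup_singleton _, ?_⟩
    intro a ha b hb
    rw [List.mem_singleton] at hb
    subst hb
    exact Finset.ne_of_mem_erase (Finset.mem_sort (α := Fin (d+1)) (· ≤ ·) |>.mp ha)
  refine (fun h1 h2 => List.Perm.eq_of_pairwise' (Finset.pairwise_sort _ _) h2 h1) ?_ ?_
  · refine List.perm_of_nodup_nodup_toFinset_eq (Finset.sort_nodup _ _) hnd ?_
    rw [Finset.sort_toFinset, List.toFinset_append, Finset.sort_toFinset]
    simp only [List.toFinset_cons, List.toFinset_nil, insert_empty_eq]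
    rw [Finset.union_comm, ← Finset.insert_eq, Finset.insert_erase h]
  · rw [List.pairwise_append]
    refine ⟨Finset.pairwise_sort _ _, List.pairwise_singleton _ _, ?_⟩
    intro a _ b hb
    rw [List.mem_singleton] at hb
    subst hb
    exact Fin.le_last a

lemma sprod_zgen_of_not_mem {s : Finset (Fin (d + 1))} (h : Fin.last d ∉ s) :
    X.sprod d (X.zgen d) s = inl (sprodC (d + 1) s) := by
  rw [X.sprod, sprodC_eq, lprod, inl_list_prod, List.map_map]
  congr 1
  refine List.map_congr_left fun j hj => ?_
  have hj' : j ∈ s := Finset.mem_sort (α := Fin (d+1)) (· ≤ ·) |>.mp hj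
  have : j ≠ Fin.last d := fun hh => h (hh ▸ hj')
  exact zgen_of_lt (Fin.val_lt_last this)

lemma sprod_zgen_of_mem {s : Finset (Fin (d + 1))} (h : Fin.last d ∈ s) :
    X.sprod d (X.zgen d) s
      = inr (sprodC (d + 1) (s.erase (Fin.last d)) * gLL d) := by
  rw [X.sprod, sort_last h, List.map_append, List.prod_append]
  have h1 : ((s.erase (Fin.last d)).sort (· ≤ ·)).map (X.zgen d)
      = ((s.erase (Fin.last d)).sort (· ≤ ·)).map ((inl : Cl (d+1) → Xa d) ∘ gC (d + 1)) := by
    refine List.map_congr_left fun j hj => ?_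
    have hj' : j ≠ Fin.last d :=
      Finset.ne_of_mem_erase (Finset.mem_sort (α := Fin (d+1)) (· ≤ ·) |>.mp hj)
    exact zgen_of_lt (Fin.val_lt_last hj')
  rw [h1, ← List.map_map, ← inl_list_prod]
  have h2 : ([Fin.last d].map (X.zgen d)).prod = inr (gLL d) := by
    simp [zgen_last]
  rw [h2, inl_mul_inr, smul_eq_mul]
  rfl

/-- Generic span transfer along a linear map. -/
lemma span_map {A B : Type*} [AddCommMonoid A] [Module ℝ A] [AddCommMonoid B] [Module ℝ B]
    (f : A →ₗ[ℝ] B) {S : Set A} {T : Submodule ℝ B} (hST : ∀ a ∈ S, f a ∈ T)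
    {x : A} (hx : x ∈ Submodule.span ℝ S) : f x ∈ T := by
  induction hx using Submodule.span_induction with
  | mem a ha => exact hST a ha
  | zero => rw [map_zero]; exact T.zero_mem
  | add a b _ _ iha ihb => rw [map_add]; exact T.add_mem iha ihb
  | smul r a _ iha => rw [map_smul]; exact T.smul_mem r iha

def fstL (d : ℕ) : Xa d →ₗ[ℝ] Cl (d + 1) where
  toFun := fst
  map_add' := fst_add
  map_smul' := fst_smul

def sndL (d : ℕ) : Xa d →ₗ[ℝ] Cl (d + 1) where
  toFun := snd
  map_add' := snd_add
  map_smul' := snd_smul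

def inlL (d : ℕ) : Cl (d + 1) →ₗ[ℝ] Xa d where
  toFun := inl
  map_add' := inl_add _
  map_smul' r x := inl_smul (M := Cl (d+1)) r x

def inrL (d : ℕ) : Cl (d + 1) →ₗ[ℝ] Xa d where
  toFun := inr
  map_add' := inr_add _
  map_smul' r x := inr_smul (R := Cl (d+1)) r x

@[simp] lemma fstL_apply (x : Xa d) : fstL d x = x.fst := rfl
@[simp] lemma sndL_apply (x : Xa d) : sndL d x = x.snd := rfl
@[simp] lemma inlL_apply (c : Cl (d + 1)) : inlL d c = inl c := rfl
@[simp] lemma inrL_apply (c : Cl (d + 1)) : inrL d c = inr c := rfl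

lemma Z0_fst {z : Xa d} (hz : z ∈ X.Z0 d) : z.fst ∈ EOS (d + 1) d True := by
  refine span_map (fstL d) ?_ hz
  rintro x ⟨s, hs_even, rfl⟩
  by_cases h : Fin.last d ∈ s
  · rw [sprod_zgen_of_mem h]
    rw [fstL_apply, fst_inr]
    exact Submodule.zero_mem _
  · rw [sprod_zgen_of_not_mem h]
    rw [fstL_apply, fst_inl]
    refine Submodule.subset_span ⟨s, fun j hj => ?_, by tauto, rfl⟩
    exact Fin.val_lt_last (fun hh => h (hh ▸ hj))

lemma Z0_snd {z : Xa d} (hz : z ∈ X.Z0 d) :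
    ∃ y ∈ EOS (d + 1) d False, z.snd = y * gLL d := by
  have hmem : z.snd ∈ Submodule.map (LinearMap.mulRight ℝ (gLL d)) (EOS (d + 1) d False) := by
    refine span_map (sndL d) ?_ hz
    rintro x ⟨s, hs_even, rfl⟩
    by_cases h : Fin.last d ∈ s
    · rw [sprod_zgen_of_mem h]
      rw [sndL_apply, snd_inr]
      refine ⟨sprodC (d + 1) (s.erase (Fin.last d)), ?_, rfl⟩
      refine Submodule.subset_span ⟨s.erase (Fin.last d), fun j hj => ?_, ?_, rfl⟩
      · exact Fin.val_lt_last (Finset.ne_of_mem_erase hj)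
      · have hc : (s.erase (Fin.last d)).card = s.card - 1 := Finset.card_erase_of_mem h
        have hpos : 0 < s.card := Finset.card_pos.mpr ⟨_, h⟩
        rw [hc]
        simp only [Nat.even_iff] at hs_even ⊢
        constructor
        · intro hmod; omega
        · intro hfalse; exact hfalse.elim
    · rw [sprod_zgen_of_not_mem h]
      rw [sndL_apply, snd_inl]
      exact Submodule.zero_mem _
  obtain ⟨y, hy, hxy⟩ := hmem
  exact ⟨y, hy, hxy.symm⟩

lemma ClE_fst {x : Xa d} (hx : x ∈ X.ClE d d) : x.fst ∈ EOS (d + 1) d True := by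
  refine span_map (fstL d) ?_ hx
  rintro a ⟨s, hsk, hs_even, rfl⟩
  rw [sprod_e_eq, fstL_apply, fst_inl]
  exact Submodule.subset_span ⟨s, hsk, by tauto, rfl⟩

lemma ClE_snd {x : Xa d} (hx : x ∈ X.ClE d d) : x.snd = 0 := by
  have : x.snd ∈ (⊥ : Submodule ℝ (Cl (d + 1))) := by
    refine span_map (sndL d) ?_ hx
    rintro a ⟨s, hsk, hs_even, rfl⟩
    rw [sprod_e_eq, sndL_apply, snd_inl]
    exact Submodule.zero_mem _
  simpa using this

lemma inl_mem_ClE {c : Cl (d + 1)} (hc : c ∈ EOS (d + 1) d True) :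
    (inl c : Xa d) ∈ X.ClE d d := by
  refine span_map (inlL d) ?_ hc
  rintro a ⟨s, hsk, hsb, rfl⟩
  exact Submodule.subset_span ⟨s, hsk, hsb.mpr trivial, (sprod_e_eq s).symm⟩

lemma inl_mem_Z0 {c : Cl (d + 1)} (hc : c ∈ EOS (d + 1) d True) :
    (inl c : Xa d) ∈ X.Z0 d := by
  refine span_map (inlL d) ?_ hc
  rintro a ⟨s, hsk, hsb, rfl⟩
  have h : Fin.last d ∉ s := fun hh => by
    have := hsk _ hh; simp at this
  exact Submodule.subset_span ⟨s, hsb.mpr trivial, (sprod_zgen_of_not_mem h).symm⟩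

lemma inr_mul_G_mem_Z0 {y : Cl (d + 1)} (hy : y ∈ EOS (d + 1) d False) :
    (inr (y * gLL d) : Xa d) ∈ X.Z0 d := by
  refine span_map ((inrL d).comp (LinearMap.mulRight ℝ (gLL d))) ?_ hy
  rintro a ⟨s, hsk, hsb, rfl⟩
  have hlast : Fin.last d ∉ s := fun hh => by
    have := hsk _ hh; simp at this
  have hmem : Fin.last d ∈ insert (Fin.last d) s := Finset.mem_insert_self _ _
  refine Submodule.subset_span ⟨insert (Fin.last d) s, ?_, ?_⟩
  · rw [Finset.card_insert_of_notMem hlast]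
    rw [iff_false] at hsb
    simp only [Nat.even_iff] at hsb ⊢
    omega
  · simp only [LinearMap.comp_apply, LinearMap.mulRight_apply, inrL_apply]
    rw [sprod_zgen_of_mem hmem, Finset.erase_insert hlast]

end XAux

end AuxX
section AuxComp

open CliffordAlgebra TrivSqZeroExt ClAux

namespace XAux

variable {d : ℕ}

/-- Extension of a vector in `ℝ^d` to `ℝ^{d+1}` by zero. -/
def extd (d : ℕ) (v : Fin d → ℝ) : Fin (d + 1) → ℝ :=
  fun j => if h : (j : ℕ) < d then v ⟨j, h⟩ else 0

lemma extd_zero : extd d 0 = 0 := by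
  funext j; by_cases h : (j : ℕ) < d <;> simp [extd, h]

lemma extd_add (u v : Fin d → ℝ) : extd d (u + v) = extd d u + extd d v := by
  funext j; by_cases h : (j : ℕ) < d <;> simp [extd, h]

lemma extd_sub (u v : Fin d → ℝ) : extd d (u - v) = extd d u - extd d v := by
  funext j; by_cases h : (j : ℕ) < d <;> simp [extd, h]

lemma iK_inl (v : Fin d → ℝ) : X.iK d d v = inl (ι (Qn (d + 1)) (extd d v)) := rfl

lemma iMap_inl (v : Fin d → ℝ) : X.iMap d v = inl (ι (Qn (d + 1)) (extd d v)) := rfl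

lemma iota_extd_mem (v : Fin d → ℝ) :
    ι (Qn (d + 1)) (extd d v) ∈ EOS (d + 1) d False :=
  iota_mem_odd (fun j h => dif_neg h)

/-- `e_{d+1}·e_{d+2} = inr G`. -/
lemma eL_mul_eps : X.eL d * X.eps d = inr (gLL d) := by
  rw [X.eL, X.e, X.eps]
  show inl (gC (d + 1) (Fin.last d)) * DualNumber.eps = _
  rw [DualNumber.eps, inl_mul_inr, smul_eq_mul, mul_one]
  rfl

lemma mid_eq (v : Fin d → ℝ) :
    X.eps d * X.iMap d v + X.eL d
      = inl (gLL d) + inr (ι (Qn (d + 1)) (extd d v)) := by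
  rw [X.eps, iMap_inl, DualNumber.eps, inr_mul_inl, op_smul_eq_mul, one_mul, X.eL, X.e, add_comm]
  rfl

lemma mid_fst (v : Fin d → ℝ) : (X.eps d * X.iMap d v + X.eL d).fst = gLL d := by
  rw [mid_eq, fst_add, fst_inl, fst_inr, add_zero]

lemma mid_snd (v : Fin d → ℝ) :
    (X.eps d * X.iMap d v + X.eL d).snd = ι (Qn (d + 1)) (extd d v) := by
  rw [mid_eq, snd_add, snd_inl, snd_inr, zero_add]

@[simp] lemma fst_conj (x : Xa d) : (X.conj d x).fst = conjC (d + 1) x.fst := by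
  rw [X.conj]; simp

@[simp] lemma snd_conj (x : Xa d) : (X.conj d x).snd = conjC (d + 1) x.snd := by
  rw [X.conj]; simp

lemma snd_mul' (x y : Xa d) : (x * y).snd = x.fst * y.snd + x.snd * y.fst := by
  rw [snd_mul, smul_eq_mul, op_smul_eq_mul]

lemma fst_triple (x m y : Xa d) : (x * m * y).fst = x.fst * m.fst * y.fst := by
  rw [fst_mul, fst_mul]

lemma snd_triple (x m y : Xa d) :
    (x * m * y).snd
      = x.fst * m.fst * y.snd + x.fst * m.snd * y.fst + x.snd * m.fst * y.fst := by
  rw [snd_mul', snd_mul', fst_mul, add_mul]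
  simp only [mul_add, mul_assoc]
  abel

lemma Nm_fst (x : Xa d) : (X.Nm d x).fst = x.fst * conjC (d + 1) x.fst := by
  rw [X.Nm, fst_mul, fst_conj]

lemma Nm_snd (x : Xa d) :
    (X.Nm d x).snd = x.fst * conjC (d + 1) x.snd + x.snd * conjC (d + 1) x.fst := by
  rw [X.Nm, snd_mul', fst_conj, snd_conj]

/-- The `gL` commutation lemmas specialized to `Cl_{d+1}` with cutoff `d`. -/
lemma gL_sq : gLL d * gLL d = -1 := gC_mul_self _

lemma gL_comm {x : Cl (d + 1)} (hx : x ∈ EOS (d + 1) d True) :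
    gLL d * x = x * gLL d :=
  gC_comm_of_even (by simp) hx

lemma gL_anticomm {x : Cl (d + 1)} (hx : x ∈ EOS (d + 1) d False) :
    gLL d * x = -(x * gLL d) :=
  gC_anticomm_of_odd (by simp) hx

lemma gL_sandwich {y : Cl (d + 1)} (hy : y ∈ EOS (d + 1) d False) :
    gLL d * y * gLL d = y := by
  rw [gL_anticomm hy, neg_mul, mul_assoc, gL_sq, mul_neg, mul_one, neg_neg]

lemma conjC_gL : conjC (d + 1) (gLL d) = -(gLL d) := conjC_iota _

lemma mulTT {x y : Cl (d + 1)} (hx : x ∈ EOS (d + 1) d True) (hy : y ∈ EOS (d + 1) d True) :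
    x * y ∈ EOS (d + 1) d True := EOS_cast (by tauto) (mul_mem_EOS hx hy)

lemma mulTF {x y : Cl (d + 1)} (hx : x ∈ EOS (d + 1) d True) (hy : y ∈ EOS (d + 1) d False) :
    x * y ∈ EOS (d + 1) d False := EOS_cast (by tauto) (mul_mem_EOS hx hy)

lemma mulFT {x y : Cl (d + 1)} (hx : x ∈ EOS (d + 1) d False) (hy : y ∈ EOS (d + 1) d True) :
    x * y ∈ EOS (d + 1) d False := EOS_cast (by tauto) (mul_mem_EOS hx hy)

/-- The second component of the correction term. -/
lemma corr_eq (g : Cl (d + 1)) (a p : Fin d → ℝ) :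
    (2 : ℝ)⁻¹ • (X.eL d * X.eps d * (X.iMap d p * inl g - inl g * X.iMap d a))
      = inr ((2 : ℝ)⁻¹ • (gLL d * (ι (Qn (d + 1)) (extd d p) * g
          - g * ι (Qn (d + 1)) (extd d a)))) := by
  rw [eL_mul_eps, iMap_inl, iMap_inl, inl_mul_inl, inl_mul_inl, ← inl_sub,
    inr_mul_inl, op_smul_eq_mul, ← inr_smul]

end XAux

end AuxComp

section Main

open CliffordAlgebra TrivSqZeroExt ClAux XAux

/-- For any `a, p ∈ ℝ^d`,
`T_{ap} = {γ + ½·e_{d+1}e_{d+2}·(i(p)γ − γ·i(a)) : γ ∈ Spin(d)}`. -/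
theorem T_eq_spin_description (d : ℕ) (a p : Fin d → ℝ) :
    X.T d a p = {x | ∃ γ ∈ X.Spin d d,
      x = γ + (2 : ℝ)⁻¹ • (X.eL d * X.eps d * (X.iMap d p * γ - γ * X.iMap d a))} := by
  ext x
  simp only [Set.mem_setOf_eq]
  constructor
  · intro hx
    simp only [X.T, X.Spun, Set.mem_setOf_eq] at hx
    obtain ⟨⟨hZ0, hNm, hSpun⟩, hT⟩ := hx
    have hz₀ : x.fst ∈ EOS (d + 1) d True := Z0_fst hZ0
    obtain ⟨y', hy', hz₁⟩ := Z0_snd hZ0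
    have hy : -y' ∈ EOS (d + 1) d False := Submodule.neg_mem _ hy'
    set y : Cl (d + 1) := -y' with hy_def
    have hz₁' : x.snd = gLL d * y := by
      rw [hy_def, mul_neg, gL_anticomm hy', neg_neg]; exact hz₁
    have hN1 : x.fst * conjC (d + 1) x.fst = 1 := by
      have h := congrArg TrivSqZeroExt.fst hNm
      rwa [Nm_fst, fst_one] at h
    have hN2 : x.fst * conjC (d + 1) x.snd + x.snd * conjC (d + 1) x.fst = 0 := by
      have h := congrArg TrivSqZeroExt.snd hNm
      rwa [Nm_snd, snd_one] at h
    have hrev : conjC (d + 1) x.fst * x.fst = 1 := mul_eq_one_symm hN1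
    have hcy : conjC (d + 1) y ∈ EOS (d + 1) d False := conjC_mem hy
    have hcz₁ : conjC (d + 1) x.snd = gLL d * conjC (d + 1) y := by
      rw [hz₁', conjC_mul, conjC_gL, mul_neg, gL_anticomm hcy]
    have hsnd_of : ∀ (m w : Xa d), x * m * X.conj d x = w →
        x.fst * m.fst * conjC (d + 1) x.snd + x.fst * m.snd * conjC (d + 1) x.fst
          + x.snd * m.fst * conjC (d + 1) x.fst = w.snd := by
      intro m w h
      have h2 := congrArg TrivSqZeroExt.snd h
      rwa [snd_triple, snd_conj, fst_conj] at h2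
    have hSpun' : ∀ v : Fin d → ℝ, ∃ w : Fin d → ℝ,
        x.fst * gLL d * conjC (d + 1) x.snd
          + x.fst * ι (Qn (d + 1)) (extd d v) * conjC (d + 1) x.fst
          + x.snd * gLL d * conjC (d + 1) x.fst = ι (Qn (d + 1)) (extd d w) := by
      intro v
      obtain ⟨w, hw⟩ := hSpun v
      have h := hsnd_of _ _ hw
      rw [mid_fst, mid_snd, mid_snd] at h
      exact ⟨w, h⟩
    obtain ⟨w₀, hw₀⟩ := hSpun' 0
    rw [extd_zero, map_zero, mul_zero, zero_mul, add_zero] at hw₀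
    have hTsnd : x.fst * gLL d * conjC (d + 1) x.snd
        + x.fst * ι (Qn (d + 1)) (extd d a) * conjC (d + 1) x.fst
        + x.snd * gLL d * conjC (d + 1) x.fst = ι (Qn (d + 1)) (extd d p) := by
      have h := hsnd_of _ _ hT
      rwa [mid_fst, mid_snd, mid_snd] at h
    have id1 : x.fst * gLL d * conjC (d + 1) x.snd = -(x.fst * conjC (d + 1) y) := by
      rw [hcz₁, mul_assoc, ← mul_assoc (gLL d), gL_sq, neg_one_mul, mul_neg]
    have id2 : x.snd * gLL d * conjC (d + 1) x.fst = y * conjC (d + 1) x.fst := by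
      rw [hz₁', gL_sandwich hy]
    have id3 : x.fst * conjC (d + 1) y + y * conjC (d + 1) x.fst = 0 := by
      have h2 := hN2
      rw [hcz₁, hz₁'] at h2
      have c1 : x.fst * (gLL d * conjC (d + 1) y)
          = gLL d * (x.fst * conjC (d + 1) y) := by
        rw [← mul_assoc, ← gL_comm hz₀, mul_assoc]
      have c2 : gLL d * y * conjC (d + 1) x.fst
          = gLL d * (y * conjC (d + 1) x.fst) := mul_assoc _ _ _
      rw [c1, c2, ← mul_add] at h2
      have h3 := congrArg (fun t => gLL d * t) h2
      simp only [mul_zero] at h3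
      rwa [← mul_assoc, gL_sq, neg_one_mul, neg_eq_zero] at h3
    rw [id1, id2] at hTsnd hw₀
    have hzy : x.fst * conjC (d + 1) y = -(y * conjC (d + 1) x.fst) :=
      eq_neg_of_add_eq_zero_left id3
    have hyCz : y * conjC (d + 1) x.fst
        = (2 : ℝ)⁻¹ • (ι (Qn (d + 1)) (extd d p)
            - x.fst * ι (Qn (d + 1)) (extd d a) * conjC (d + 1) x.fst) := by
      have h2 : (2 : ℝ) • (y * conjC (d + 1) x.fst)
          = ι (Qn (d + 1)) (extd d p)
            - x.fst * ι (Qn (d + 1)) (extd d a) * conjC (d + 1) x.fst := by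
        rw [← hTsnd, hzy]
        module
      rw [← h2, smul_smul]
      norm_num
    have hy_eq : y = (2 : ℝ)⁻¹ • (ι (Qn (d + 1)) (extd d p) * x.fst
        - x.fst * ι (Qn (d + 1)) (extd d a)) := by
      have h2 : y = (y * conjC (d + 1) x.fst) * x.fst := by
        rw [mul_assoc, hrev, mul_one]
      rw [h2, hyCz, smul_mul_assoc]
      congr 1
      rw [sub_mul, mul_assoc (x.fst * ι (Qn (d + 1)) (extd d a)), hrev, mul_one]
    have hsnd_eq : x.snd = (2 : ℝ)⁻¹ • (gLL d * (ι (Qn (d + 1)) (extd d p) * x.fst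
        - x.fst * ι (Qn (d + 1)) (extd d a))) := by
      rw [hz₁', hy_eq, mul_smul_comm]
    refine ⟨inl x.fst, ⟨inl_mem_ClE hz₀, ?_, ?_⟩, ?_⟩
    · refine TrivSqZeroExt.ext ?_ ?_
      · rw [Nm_fst, fst_inl, fst_one]; exact hN1
      · simp only [Nm_snd, snd_inl, fst_inl, snd_one, conjC_zero, mul_zero, zero_mul,
          add_zero]
    · intro v
      obtain ⟨wv, hwv⟩ := hSpun' v
      rw [id1, id2] at hwv
      refine ⟨wv - w₀, ?_⟩
      rw [iK_inl, iK_inl]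
      refine TrivSqZeroExt.ext ?_ ?_
      · simp only [fst_triple, fst_inl, fst_conj]
        have h2 : x.fst * ι (Qn (d + 1)) (extd d v) * conjC (d + 1) x.fst
            = ι (Qn (d + 1)) (extd d wv) - ι (Qn (d + 1)) (extd d w₀) := by
          rw [← hw₀, ← hwv]; abel
        rw [h2, ← map_sub, ← extd_sub]
      · simp only [snd_triple, snd_conj, fst_conj, snd_inl, fst_inl, conjC_zero,
          mul_zero, zero_mul, add_zero, zero_add]
    · rw [corr_eq]
      refine TrivSqZeroExt.ext ?_ ?_
      · simp only [fst_add, fst_inl, fst_inr, add_zero]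
      · simp only [snd_add, snd_inl, snd_inr, zero_add]; exact hsnd_eq
  · rintro ⟨γ, ⟨hClE, hNmγ, hSpin⟩, rfl⟩
    have hg : γ.fst ∈ EOS (d + 1) d True := ClE_fst hClE
    have hγsnd : γ.snd = 0 := ClE_snd hClE
    have hγ : γ = inl γ.fst := TrivSqZeroExt.ext rfl (by rw [snd_inl, hγsnd])
    have hCg : conjC (d + 1) γ.fst ∈ EOS (d + 1) d True := conjC_mem hg
    have hN : γ.fst * conjC (d + 1) γ.fst = 1 := by
      have h := congrArg TrivSqZeroExt.fst hNmγ
      rwa [Nm_fst, fst_one] at h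
    have hact : ∀ v : Fin d → ℝ, ∃ w : Fin d → ℝ,
        γ.fst * ι (Qn (d + 1)) (extd d v) * conjC (d + 1) γ.fst
          = ι (Qn (d + 1)) (extd d w) := by
      intro v
      obtain ⟨w, hw⟩ := hSpin v
      refine ⟨w, ?_⟩
      have h := congrArg TrivSqZeroExt.fst hw
      rwa [iK_inl, iK_inl, fst_triple, fst_conj, fst_inl, fst_inl] at h
    obtain ⟨wa, hwa⟩ := hact a
    rw [hγ, corr_eq]
    set g := γ.fst with hg_def
    set cr := (2 : ℝ)⁻¹ • (gLL d * (ι (Qn (d + 1)) (extd d p) * g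
      - g * ι (Qn (d + 1)) (extd d a))) with hcr_def
    have hX : ι (Qn (d + 1)) (extd d p) * g - g * ι (Qn (d + 1)) (extd d a)
        ∈ EOS (d + 1) d False :=
      Submodule.sub_mem _ (mulFT (iota_extd_mem p) hg) (mulTF hg (iota_extd_mem a))
    have hxf : (inl g + inr cr : Xa d).fst = g := by
      rw [fst_add, fst_inl, fst_inr, add_zero]
    have hxs : (inl g + inr cr : Xa d).snd = cr := by
      rw [snd_add, snd_inl, snd_inr, zero_add]
    have hCX : conjC (d + 1) (ι (Qn (d + 1)) (extd d p) * g - g * ι (Qn (d + 1)) (extd d a))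
        = ι (Qn (d + 1)) (extd d a) * conjC (d + 1) g
          - conjC (d + 1) g * ι (Qn (d + 1)) (extd d p) := by
      rw [conjC_sub, conjC_mul, conjC_mul, conjC_iota, conjC_iota, mul_neg, neg_mul]
      abel
    have hCcr : conjC (d + 1) cr
        = (2 : ℝ)⁻¹ • ((conjC (d + 1) g * ι (Qn (d + 1)) (extd d p)
            - ι (Qn (d + 1)) (extd d a) * conjC (d + 1) g) * gLL d) := by
      rw [hcr_def, conjC_smul, conjC_mul, conjC_gL, hCX]
      congr 1
      rw [mul_neg, ← neg_mul, neg_sub]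
    have hmemS : conjC (d + 1) g * ι (Qn (d + 1)) (extd d p)
        - ι (Qn (d + 1)) (extd d a) * conjC (d + 1) g ∈ EOS (d + 1) d False :=
      Submodule.sub_mem _ (mulTF hCg (iota_extd_mem p)) (mulFT (iota_extd_mem a) hCg)
    have hPWmem : ι (Qn (d + 1)) (extd d p)
        - g * ι (Qn (d + 1)) (extd d a) * conjC (d + 1) g ∈ EOS (d + 1) d False := by
      rw [hwa, ← map_sub, ← extd_sub]
      exact iota_extd_mem _
    have hXCg : (ι (Qn (d + 1)) (extd d p) * g - g * ι (Qn (d + 1)) (extd d a))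
          * conjC (d + 1) g
        = ι (Qn (d + 1)) (extd d p) - g * ι (Qn (d + 1)) (extd d a) * conjC (d + 1) g := by
      rw [sub_mul, mul_assoc (ι (Qn (d + 1)) (extd d p)), hN, mul_one]
    have key1 : g * conjC (d + 1) cr
        = (2 : ℝ)⁻¹ • ((ι (Qn (d + 1)) (extd d p)
            - g * ι (Qn (d + 1)) (extd d a) * conjC (d + 1) g) * gLL d) := by
      rw [hCcr, mul_smul_comm]
      congr 1
      rw [← mul_assoc, mul_sub, ← mul_assoc, ← mul_assoc, hN, one_mul]
    have key2 : cr * conjC (d + 1) g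
        = (2 : ℝ)⁻¹ • (gLL d * (ι (Qn (d + 1)) (extd d p)
            - g * ι (Qn (d + 1)) (extd d a) * conjC (d + 1) g)) := by
      rw [hcr_def, smul_mul_assoc, mul_assoc, hXCg]
    have key3 : g * gLL d * conjC (d + 1) cr
        = (2 : ℝ)⁻¹ • (ι (Qn (d + 1)) (extd d p)
            - g * ι (Qn (d + 1)) (extd d a) * conjC (d + 1) g) := by
      rw [hCcr, mul_smul_comm]
      congr 1
      rw [mul_assoc g, ← mul_assoc (gLL d), gL_sandwich hmemS, mul_sub, ← mul_assoc,
        ← mul_assoc, hN, one_mul]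
    have key4 : cr * gLL d * conjC (d + 1) g
        = (2 : ℝ)⁻¹ • (ι (Qn (d + 1)) (extd d p)
            - g * ι (Qn (d + 1)) (extd d a) * conjC (d + 1) g) := by
      rw [hcr_def, smul_mul_assoc, smul_mul_assoc, gL_sandwich hX, hXCg]
    have hconj_fst : (X.conj d (inl g + inr cr)).fst = conjC (d + 1) g := by
      rw [fst_conj, hxf]
    have hconj_snd : (X.conj d (inl g + inr cr)).snd = conjC (d + 1) cr := by
      rw [snd_conj, hxs]
    have hcomp : ∀ v : Fin d → ℝ,
        (inl g + inr cr) * (X.eps d * X.iMap d v + X.eL d) * X.conj d (inl g + inr cr)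
          = inl (gLL d) + inr (g * ι (Qn (d + 1)) (extd d v) * conjC (d + 1) g
              + (ι (Qn (d + 1)) (extd d p)
                - g * ι (Qn (d + 1)) (extd d a) * conjC (d + 1) g)) := by
      intro v
      refine TrivSqZeroExt.ext ?_ ?_
      · rw [fst_triple, hconj_fst, hxf, mid_fst]
        simp only [fst_add, fst_inl, fst_inr, add_zero]
        rw [← gL_comm hg, mul_assoc, hN, mul_one]
      · rw [snd_triple, hconj_fst, hconj_snd, hxf, hxs, mid_fst, mid_snd]
        simp only [snd_add, snd_inl, snd_inr, zero_add]
        rw [key3, key4]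
        module
    simp only [X.T, X.Spun, Set.mem_setOf_eq]
    refine ⟨⟨?_, ?_, ?_⟩, ?_⟩
    · refine Submodule.add_mem _ (inl_mem_Z0 hg) ?_
      have h1 : (inr (gLL d * (ι (Qn (d + 1)) (extd d p) * g
          - g * ι (Qn (d + 1)) (extd d a))) : Xa d) ∈ X.Z0 d := by
        rw [gL_anticomm hX, ← neg_mul]
        exact inr_mul_G_mem_Z0 (Submodule.neg_mem _ hX)
      have h2 : (inr cr : Xa d) = (2 : ℝ)⁻¹ • inr (gLL d * (ι (Qn (d + 1)) (extd d p) * g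
          - g * ι (Qn (d + 1)) (extd d a))) := by
        rw [hcr_def, ← inr_smul]
      rw [h2]
      exact Submodule.smul_mem _ _ h1
    · refine TrivSqZeroExt.ext ?_ ?_
      · rw [Nm_fst, hxf, fst_one]; exact hN
      · rw [Nm_snd, hxf, hxs, snd_one, key1, key2, gL_anticomm hPWmem]
        module
    · intro v
      obtain ⟨wv, hwv⟩ := hact v
      refine ⟨wv + (p - wa), ?_⟩
      rw [hcomp v, mid_eq]
      congr 1
      rw [hwv, hwa, extd_add, extd_sub, map_add, map_sub]
    · rw [hcomp a, mid_eq]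
      congr 1
      rw [hwa]
      congr 1
      module

end Main
end
end

section
/- For any a, p ∈ ℝ^d, T_{ap} = F_{ap} ∩ Spun(d). -/
noncomputable section

open CliffordAlgebra

namespace TFS

lemma Qn_apply (n : ℕ) (v : Fin n → ℝ) : Qn n v = ∑ i, -(v i * v i) := by
  simp [Qn, QuadraticMap.weightedSumSquares_apply, smul_eq_mul]

lemma ι_anti {n : ℕ} (u v : Fin n → ℝ) (h : ∑ i, u i * v i = 0) :
    ι (Qn n) u * ι (Qn n) v = -(ι (Qn n) v * ι (Qn n) u) := by
  have h2 := CliffordAlgebra.ι_mul_ι_add_swap (Q := Qn n) u v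
  have hp : QuadraticMap.polar (Qn n) u v = 0 := by
    simp only [QuadraticMap.polar, Qn_apply, Pi.add_apply]
    rw [← Finset.sum_sub_distrib, ← Finset.sum_sub_distrib]
    have : ∀ i ∈ Finset.univ (α := Fin n), (-((u i + v i) * (u i + v i)) - -(u i * u i) - -(v i * v i)) = (-2 : ℝ) * (u i * v i) := by
      intro i _; ring
    rw [Finset.sum_congr rfl this, ← Finset.mul_sum, h, mul_zero]
  rw [hp] at h2
  simp only [map_zero] at h2
  exact eq_neg_of_add_eq_zero_left h2

lemma gsq {n : ℕ} (j : Fin n) : gC n j * gC n j = -1 := by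
  rw [gC, CliffordAlgebra.ι_sq_scalar, Qn_apply]
  have : ∑ i, -((Pi.single j 1 : Fin n → ℝ) i * (Pi.single j 1 : Fin n → ℝ) i) = -1 := by
    rw [Finset.sum_eq_single j]
    · simp
    · intro b _ hb; simp [Pi.single_apply, hb]
    · simp
  rw [this]; simp

lemma ganti {n : ℕ} {j k : Fin n} (h : j ≠ k) : gC n j * gC n k = -(gC n k * gC n j) := by
  apply ι_anti
  rw [Finset.sum_eq_single j]
  · simp [Pi.single_apply, h.symm]
  · intro b _ hb; simp [Pi.single_apply, hb]
  · simp


lemma ins {n : ℕ} (j : Fin n) : ∀ l : List (Fin n), l.Pairwise (· < ·) →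
    ∃ (c : ℝ) (l' : List (Fin n)), l'.Pairwise (· < ·) ∧ (∀ b ∈ l', b = j ∨ b ∈ l) ∧
      gC n j * (l.map (gC n)).prod = c • (l'.map (gC n)).prod
  | [], _ => ⟨1, [j], List.pairwise_singleton _ j, by simp, by simp⟩
  | a :: t, hs => by
    have ht : t.Pairwise (· < ·) := hs.of_cons
    have ha : ∀ b ∈ t, a < b := fun b hb => (List.pairwise_cons.mp hs).1 b hb
    rcases lt_trichotomy j a with hja | hja | hja
    · exact ⟨1, j :: a :: t, List.pairwise_cons.mpr ⟨by
        intro b hb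
        rcases List.mem_cons.mp hb with rfl | hb
        · exact hja
        · exact hja.trans (ha b hb), hs⟩, by simp, by simp⟩
    · refine ⟨-1, t, ht, fun b hb => Or.inr (List.mem_cons_of_mem a hb), ?_⟩
      subst hja
      simp only [List.map_cons, List.prod_cons, ← mul_assoc, gsq]
      simp
    · obtain ⟨c, l'', hs'', hm'', he''⟩ := ins j t ht
      refine ⟨-c, a :: l'', List.pairwise_cons.mpr ⟨?_, hs''⟩, ?_, ?_⟩
      · intro b hb
        rcases hm'' b hb with rfl | hb
        · exact hja
        · exact ha b hb
      · intro b hb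
        rcases List.mem_cons.mp hb with rfl | hb
        · exact Or.inr (List.mem_cons_self)
        · rcases hm'' b hb with rfl | hb'
          · exact Or.inl rfl
          · exact Or.inr (List.mem_cons_of_mem a hb')
      · have hja' : j ≠ a := ne_of_gt hja
        simp only [List.map_cons, List.prod_cons, ← mul_assoc, ganti hja']
        rw [neg_mul, mul_assoc, he'', neg_smul, mul_smul_comm]

def Sspan (n : ℕ) : Submodule ℝ (Cl n) := Submodule.span ℝ (Set.range (sprodC n))

lemma sorted_prod_mem {n : ℕ} (l : List (Fin n)) (hl : l.Pairwise (· < ·)) :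
    (l.map (gC n)).prod ∈ Sspan n := by
  have hnd : l.Nodup := hl.nodup
  have : l.toFinset.sort (· ≤ ·) = l :=
    (List.toFinset_sort (· ≤ ·) hnd).mpr (hl.imp le_of_lt)
  exact Submodule.subset_span ⟨l.toFinset, by rw [sprodC, this]⟩

lemma mul_mem_Sspan {n : ℕ} (x : Cl n) : ∀ y ∈ Sspan n, x * y ∈ Sspan n := by
  induction x using CliffordAlgebra.induction with
  | algebraMap r =>
    intro y hy
    rw [← Algebra.smul_def]
    exact Submodule.smul_mem _ r hy
  | add x₁ x₂ h₁ h₂ =>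
    intro y hy
    rw [add_mul]
    exact Submodule.add_mem _ (h₁ y hy) (h₂ y hy)
  | mul x₁ x₂ h₁ h₂ =>
    intro y hy
    rw [mul_assoc]
    exact h₁ _ (h₂ y hy)
  | ι v =>
    intro y hy
    induction hy using Submodule.span_induction with
    | mem z hz =>
      obtain ⟨s, rfl⟩ := hz
      have hv : v = ∑ j, v j • (Pi.single j 1 : Fin n → ℝ) := by
        funext i; simp [Pi.single_apply]
      have : CliffordAlgebra.ι (Qn n) v = ∑ j, v j • gC n j := by
        conv_lhs => rw [hv]
        simp [gC]
      rw [this, Finset.sum_mul]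
      apply Submodule.sum_mem
      intro j _
      rw [smul_mul_assoc]
      apply Submodule.smul_mem
      obtain ⟨c, l', hs', _, he'⟩ := ins j (s.sort (· ≤ ·)) ((Finset.sortedLT_sort s).pairwise)
      rw [sprodC, he']
      exact Submodule.smul_mem _ c (sorted_prod_mem l' hs')
    | zero => simp
    | add y₁ y₂ _ _ hy₁ hy₂ => rw [mul_add]; exact Submodule.add_mem _ hy₁ hy₂
    | smul c y _ hy => rw [mul_smul_comm]; exact Submodule.smul_mem _ c hy

lemma Sspan_eq_top (n : ℕ) : Sspan n = ⊤ := by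
  rw [Submodule.eq_top_iff']
  intro x
  have h1 : (1 : Cl n) ∈ Sspan n := by
    have : (1 : Cl n) = sprodC n ∅ := by simp [sprodC]
    rw [this]; exact Submodule.subset_span ⟨∅, rfl⟩
  simpa using mul_mem_Sspan x 1 h1

instance Cl_finite (n : ℕ) : Module.Finite ℝ (Cl n) := by
  classical
  refine ⟨⟨Finset.image (sprodC n) Finset.univ, ?_⟩⟩
  rw [Finset.coe_image, Finset.coe_univ, Set.image_univ]
  exact Sspan_eq_top n

lemma mul_eq_one_symm {n : ℕ} {x y : Cl n} (h : x * y = 1) : y * x = 1 := by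
  have hf : (LinearMap.mulLeft ℝ x) * (LinearMap.mulLeft ℝ y) = 1 := by
    rw [Module.End.mul_eq_comp, ← LinearMap.mulLeft_mul, h, LinearMap.mulLeft_one]; rfl
  have hg := mul_eq_one_comm.mp hf
  have := LinearMap.congr_fun hg 1
  simpa using this

section D

open TrivSqZeroExt

variable (d : ℕ)

def gL : Cl (d + 1) := gC (d + 1) (Fin.last d)

def Iv (v : Fin d → ℝ) : Cl (d + 1) :=
  CliffordAlgebra.ι (Qn (d + 1)) (fun j : Fin (d + 1) => if h : (j : ℕ) < d then v ⟨j, h⟩ else 0)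

lemma iMap_eq (v : Fin d → ℝ) : X.iMap d v = inl (Iv d v) := rfl

lemma eL_eq : X.eL d = inl (gL d) := rfl

lemma gL_sq : gL d * gL d = -1 := gsq _

lemma gL_anti_Iv (v : Fin d → ℝ) : gL d * Iv d v = -(Iv d v * gL d) := by
  apply ι_anti
  rw [Finset.sum_eq_single (Fin.last d)]
  · simp
  · intro b _ hb; simp [Pi.single_apply, hb]
  · simp

lemma gL_anti_g {j : Fin (d + 1)} (h : (j : ℕ) < d) :
    gL d * gC (d + 1) j = -(gC (d + 1) j * gL d) := by
  apply ganti
  intro he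
  rw [← he] at h
  simp at h

lemma list_anti : ∀ l : List (Fin (d + 1)), (∀ j ∈ l, (j : ℕ) < d) →
    gL d * (l.map (gC (d + 1))).prod =
      ((-1 : ℝ) ^ l.length) • ((l.map (gC (d + 1))).prod * gL d)
  | [], _ => by simp
  | a :: t, h => by
    have ha : gL d * gC (d + 1) a = -(gC (d + 1) a * gL d) :=
      gL_anti_g d (h a (List.mem_cons_self))
    have ih := list_anti t (fun j hj => h j (List.mem_cons_of_mem a hj))
    simp only [List.map_cons, List.prod_cons, List.length_cons]
    calc gL d * (gC (d + 1) a * (t.map (gC (d + 1))).prod)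
        = (gL d * gC (d + 1) a) * (t.map (gC (d + 1))).prod := by rw [mul_assoc]
      _ = -(gC (d + 1) a * (gL d * (t.map (gC (d + 1))).prod)) := by
          rw [ha, neg_mul, mul_assoc]
      _ = -(gC (d + 1) a * (((-1 : ℝ) ^ t.length) • ((t.map (gC (d + 1))).prod * gL d))) := by
          rw [ih]
      _ = ((-1 : ℝ) ^ (t.length + 1)) • (gC (d + 1) a * (t.map (gC (d + 1))).prod * gL d) := by
          rw [mul_smul_comm, ← smul_neg, pow_succ]
          rw [mul_neg_one, neg_smul, smul_neg, mul_assoc]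

def Csub : Submodule ℝ (Cl (d + 1)) :=
  Submodule.span ℝ {y | ∃ s : Finset (Fin (d + 1)),
    (∀ j ∈ s, (j : ℕ) < d) ∧ Even s.card ∧ y = sprodC (d + 1) s}

lemma Csub_comm {y : Cl (d + 1)} (hy : y ∈ Csub d) : gL d * y = y * gL d := by
  induction hy using Submodule.span_induction with
  | mem z hz =>
    obtain ⟨s, hs, hc, rfl⟩ := hz
    have h := list_anti d (s.sort (· ≤ ·))
      (fun j hj => hs j ((Finset.mem_sort _).mp hj))
    rw [sprodC, h, Finset.length_sort, hc.neg_one_pow, one_smul]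
  | zero => simp
  | add y z _ _ h1 h2 => rw [mul_add, add_mul, h1, h2]
  | smul c y _ h1 => rw [mul_smul_comm, smul_mul_assoc, h1]

end D

section D2

open TrivSqZeroExt

variable (d : ℕ)

lemma sorted_concat_last : ∀ l : List (Fin (d + 1)), l.Pairwise (· < ·) → Fin.last d ∈ l →
    ∃ l', l = l' ++ [Fin.last d] ∧ Fin.last d ∉ l'
  | [], _, h => absurd h (List.not_mem_nil)
  | a :: t, hs, h => by
    by_cases ha : Fin.last d ∈ t
    · obtain ⟨l', he, hn⟩ := sorted_concat_last t hs.of_cons ha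
      have haa : a ≠ Fin.last d := by
        rintro rfl
        exact absurd ((List.pairwise_cons.mp hs).1 _ ha) (lt_irrefl _)
      exact ⟨a :: l', by rw [List.cons_append, he], by
        intro hm
        rcases List.mem_cons.mp hm with he' | hm'
        · exact haa he'.symm
        · exact hn hm'⟩
    · have ha' : a = Fin.last d := by
        rcases List.mem_cons.mp h with he' | hm'
        · exact he'.symm
        · exact absurd hm' ha
      subst ha'
      have ht : t = [] := by
        cases t with
        | nil => rfl
        | cons b t2 =>
          exact absurd ((List.pairwise_cons.mp hs).1 b (List.mem_cons_self))
            (not_lt.mpr (Fin.le_last b))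
      exact ⟨[], by rw [ht]; rfl, List.not_mem_nil⟩

lemma inl_list_prod (l : List (Fin (d + 1))) :
    ((l.map (fun j => (inl (gC (d + 1) j) : Xa d))).prod : Xa d) =
      inl ((l.map (gC (d + 1))).prod) := by
  induction l with
  | nil => simp only [List.map_nil, List.prod_nil, inl_one]
  | cons a t ih => simp only [List.map_cons, List.prod_cons, ih, inl_mul_inl]

lemma sprod_e (s : Finset (Fin (d + 1))) :
    X.sprod d (X.e d) s = inl (sprodC (d + 1) s) :=
  inl_list_prod d _

def W1 : Submodule ℝ (Xa d) where
  carrier := {x | fst x ∈ Csub d ∧ gL d * snd x = -(snd x * gL d)}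
  zero_mem' := by
    refine ⟨by simp only [fst_zero]; exact Submodule.zero_mem _, by simp⟩
  add_mem' := by
    rintro x y ⟨h1, h2⟩ ⟨h3, h4⟩
    refine ⟨by rw [fst_add]; exact Submodule.add_mem _ h1 h3, ?_⟩
    rw [snd_add, mul_add, add_mul, h2, h4, neg_add]
  smul_mem' := by
    rintro c x ⟨h1, h2⟩
    refine ⟨by rw [fst_smul]; exact Submodule.smul_mem _ c h1, ?_⟩
    rw [snd_smul, mul_smul_comm, smul_mul_assoc, h2, smul_neg]

lemma Z0_le_W1 : X.Z0 d ≤ W1 d := by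
  rw [X.Z0, Submodule.span_le]
  rintro x ⟨s, hc, rfl⟩
  by_cases hl : Fin.last d ∈ s
  · obtain ⟨l', hdec, hnot⟩ := sorted_concat_last d (s.sort (· ≤ ·))
      ((Finset.sortedLT_sort s).pairwise) ((Finset.mem_sort _).mpr hl)
    have hmem : ∀ j ∈ l', (j : ℕ) < d := by
      intro j hj
      have : j ≠ Fin.last d := fun he => hnot (he ▸ hj)
      exact Fin.val_lt_last this
    have hmap : l'.map (X.zgen d) = l'.map (fun j => (inl (gC (d + 1) j) : Xa d)) := by
      apply List.map_congr_left
      intro j hj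
      rw [X.zgen, if_pos (hmem j hj)]
      rfl
    have hlen : l'.length + 1 = s.card := by
      rw [← Finset.length_sort (· ≤ ·), hdec, List.length_append, List.length_singleton]
    have hodd : Odd l'.length := by
      rcases Nat.even_or_odd l'.length with he | ho
      · exfalso
        have : Odd (l'.length + 1) := he.add_one
        rw [hlen] at this
        exact (Nat.not_odd_iff_even.mpr hc) this
      · exact ho
    have hzl : X.zgen d (Fin.last d) = X.eL d * X.eps d := by
      rw [X.zgen, if_neg (by simp)]
    have hx : X.sprod d (X.zgen d) s =
        inl ((l'.map (gC (d + 1))).prod) * (inl (gL d) * X.eps d) := by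
      rw [X.sprod, hdec, List.map_append, List.prod_append, List.map_singleton,
        List.prod_singleton, hzl, hmap, inl_list_prod, eL_eq]
    set P' : Cl (d + 1) := (l'.map (gC (d + 1))).prod with hP'
    have hanti : gL d * P' = -(P' * gL d) := by
      rw [hP', list_anti d l' hmem, hodd.neg_one_pow, neg_smul, one_smul]
    constructor
    · rw [hx]
      simp only [X.eps, fst_mul, fst_inl, DualNumber.fst_eps, mul_zero]
      exact Submodule.zero_mem _
    · rw [hx]
      simp only [X.eps, DualNumber.snd_mul, fst_inl, snd_inl, DualNumber.fst_eps,
        DualNumber.snd_eps, mul_zero, zero_mul, mul_one, add_zero, zero_add]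
      rw [← mul_assoc, hanti, neg_mul]
  · have hmem : ∀ j ∈ s.sort (· ≤ ·), (j : ℕ) < d := by
      intro j hj
      have hjs : j ∈ s := (Finset.mem_sort _).mp hj
      have : j ≠ Fin.last d := fun he => hl (he ▸ hjs)
      exact Fin.val_lt_last this
    have hmap : (s.sort (· ≤ ·)).map (X.zgen d) =
        (s.sort (· ≤ ·)).map (fun j => (inl (gC (d + 1) j) : Xa d)) := by
      apply List.map_congr_left
      intro j hj
      rw [X.zgen, if_pos (hmem j hj)]
      rfl
    have hx : X.sprod d (X.zgen d) s = inl (sprodC (d + 1) s) := by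
      rw [X.sprod, hmap, inl_list_prod, sprodC]
    constructor
    · rw [hx, fst_inl]
      exact Submodule.subset_span ⟨s, fun j hj => hmem j ((Finset.mem_sort _).mpr hj), hc, rfl⟩
    · rw [hx, snd_inl]
      simp

lemma inl_mem_ClE {y : Cl (d + 1)} (hy : y ∈ Csub d) : (inl y : Xa d) ∈ X.ClE d d := by
  induction hy using Submodule.span_induction with
  | mem z hz =>
    obtain ⟨s, hs, hc, rfl⟩ := hz
    exact Submodule.subset_span ⟨s, hs, hc, (sprod_e d s).symm⟩
  | zero => simp only [inl_zero]; exact Submodule.zero_mem _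
  | add y z _ _ h1 h2 => rw [inl_add]; exact Submodule.add_mem _ h1 h2
  | smul c y _ h1 => rw [inl_smul]; exact Submodule.smul_mem _ c h1

lemma ClE_structure {x : Xa d} (hx : x ∈ X.ClE d d) : fst x ∈ Csub d ∧ snd x = 0 := by
  induction hx using Submodule.span_induction with
  | mem z hz =>
    obtain ⟨s, hs, hc, rfl⟩ := hz
    rw [sprod_e, fst_inl, snd_inl]
    exact ⟨Submodule.subset_span ⟨s, hs, hc, rfl⟩, rfl⟩
  | zero => exact ⟨by rw [fst_zero]; exact Submodule.zero_mem _, by rw [snd_zero]⟩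
  | add y z _ _ h1 h2 =>
    exact ⟨by rw [fst_add]; exact Submodule.add_mem _ h1.1 h2.1,
      by rw [snd_add, h1.2, h2.2, add_zero]⟩
  | smul c y _ h1 =>
    exact ⟨by rw [fst_smul]; exact Submodule.smul_mem _ c h1.1,
      by rw [snd_smul, h1.2, smul_zero]⟩

end D2

section D3

open TrivSqZeroExt

variable (d : ℕ)

lemma fst_conj (x : Xa d) : fst (X.conj d x) = conjC (d + 1) (fst x) := by
  rw [X.conj, fst_add, fst_inl, fst_inr, add_zero]

lemma snd_conj (x : Xa d) : snd (X.conj d x) = conjC (d + 1) (snd x) := by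
  rw [X.conj, snd_add, snd_inl, snd_inr, zero_add]

lemma Nm_iff (x : Xa d) : X.Nm d x = 1 ↔
    (fst x * conjC (d + 1) (fst x) = 1 ∧
     fst x * conjC (d + 1) (snd x) + snd x * conjC (d + 1) (fst x) = 0) := by
  constructor
  · intro h
    constructor
    · have := congrArg fst h
      rwa [X.Nm, fst_mul, fst_conj, fst_one] at this
    · have := congrArg snd h
      rwa [X.Nm, DualNumber.snd_mul, fst_conj, snd_conj, snd_one] at this
  · rintro ⟨h1, h2⟩
    apply TrivSqZeroExt.ext
    · rwa [X.Nm, fst_mul, fst_conj, fst_one]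
    · rwa [X.Nm, DualNumber.snd_mul, fst_conj, snd_conj, snd_one]

lemma vL_eq (v : Fin d → ℝ) :
    X.eps d * X.iMap d v + X.eL d = inl (gL d) + inr (Iv d v) := by
  apply TrivSqZeroExt.ext
  · simp [X.eps, iMap_eq, eL_eq]
  · simp [X.eps, iMap_eq, eL_eq]

lemma eqn_fst (x : Xa d) (v : Fin d → ℝ) :
    fst (x * (X.eps d * X.iMap d v + X.eL d) * X.conj d x) =
      fst x * gL d * conjC (d + 1) (fst x) := by
  rw [vL_eq, fst_mul, fst_mul, fst_conj, fst_add, fst_inl, fst_inr, add_zero]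

lemma eqn_snd (x : Xa d) (v : Fin d → ℝ) :
    snd (x * (X.eps d * X.iMap d v + X.eL d) * X.conj d x) =
      fst x * gL d * conjC (d + 1) (snd x) + fst x * Iv d v * conjC (d + 1) (fst x) +
        snd x * gL d * conjC (d + 1) (fst x) := by
  rw [vL_eq]
  simp only [DualNumber.snd_mul, fst_mul, fst_add, snd_add, fst_inl, fst_inr, snd_inl,
    snd_inr, fst_conj, snd_conj, add_zero, zero_add, mul_add, add_mul, mul_zero, zero_mul]
  abel

end D3

section D4

open TrivSqZeroExt

variable (d : ℕ)

lemma vL_fst (w : Fin d → ℝ) : fst (X.eps d * X.iMap d w + X.eL d) = gL d := by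
  rw [vL_eq, fst_add, fst_inl, fst_inr, add_zero]

lemma vL_snd (w : Fin d → ℝ) : snd (X.eps d * X.iMap d w + X.eL d) = Iv d w := by
  rw [vL_eq, snd_add, snd_inl, snd_inr, zero_add]

lemma eLei (v : Fin d → ℝ) :
    X.eL d * X.eps d * X.iMap d v = inr (gL d * Iv d v) := by
  apply TrivSqZeroExt.ext
  · simp [X.eps, iMap_eq, eL_eq]
  · simp [X.eps, iMap_eq, eL_eq]

lemma aff_fst (g : Cl (d + 1)) (a p : Fin d → ℝ) :
    fst ((1 + (2:ℝ)⁻¹ • (X.eL d * X.eps d * X.iMap d p)) * inl g *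
      (1 - (2:ℝ)⁻¹ • (X.eL d * X.eps d * X.iMap d a))) = g := by
  simp [eLei, fst_mul, fst_add, fst_one, fst_smul, fst_inr, fst_inl, fst_sub]

lemma aff_snd (g : Cl (d + 1)) (a p : Fin d → ℝ) :
    snd ((1 + (2:ℝ)⁻¹ • (X.eL d * X.eps d * X.iMap d p)) * inl g *
      (1 - (2:ℝ)⁻¹ • (X.eL d * X.eps d * X.iMap d a))) =
    (2:ℝ)⁻¹ • (gL d * Iv d p * g) - (2:ℝ)⁻¹ • (g * (gL d * Iv d a)) := by
  simp only [eLei, DualNumber.snd_mul, fst_mul, fst_add, fst_one, fst_smul, fst_inr,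
    fst_inl, fst_sub, snd_add, snd_one, snd_smul, snd_inr, snd_inl, snd_sub,
    smul_zero, add_zero, zero_add, mul_zero, zero_mul, mul_one, one_mul, sub_zero]
  rw [zero_sub, mul_neg, mul_smul_comm, smul_mul_assoc]
  abel

lemma core1 (G P A x0 x1 c0 c1 : Cl (d + 1))
    (hGG : G * G = -1)
    (hGx0 : G * x0 = x0 * G)
    (hGx1 : G * x1 = -(x1 * G))
    (hGp : G * P = -(P * G))
    (hGa : G * A = -(A * G))
    (hN1 : x0 * c0 = 1) (hN1' : c0 * x0 = 1)
    (hN2 : x0 * c1 + x1 * c0 = 0)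
    (hE1 : x0 * G * c0 = G)
    (hE2 : x0 * G * c1 + x0 * A * c0 + x1 * G * c0 = P) :
    x1 = (2:ℝ)⁻¹ • (G * P * x0) - (2:ℝ)⁻¹ • (x0 * (G * A)) := by
  have hc1x0 : c1 * x0 = -(c0 * x1) := by
    have h1 : c0 * ((x0 * c1 + x1 * c0) * x0) = 0 := by rw [hN2, zero_mul, mul_zero]
    have h2 : c0 * ((x0 * c1 + x1 * c0) * x0) =
        (c0 * x0) * (c1 * x0) + (c0 * x1) * (c0 * x0) := by noncomm_ring
    rw [h1, hN1', one_mul, mul_one] at h2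
    exact eq_neg_of_add_eq_zero_left h2.symm
  have h3 : (x0 * G * c1 + x0 * A * c0 + x1 * G * c0) * x0 = P * x0 := by rw [hE2]
  have h4 : (x0 * G * c1 + x0 * A * c0 + x1 * G * c0) * x0 =
      (x0 * G) * (c1 * x0) + (x0 * A) * (c0 * x0) + (x1 * G) * (c0 * x0) := by noncomm_ring
  rw [h3, hc1x0, hN1', mul_one, mul_one, mul_neg] at h4
  have h5 : (x0 * G) * (c0 * x1) = G * x1 := by
    calc (x0 * G) * (c0 * x1) = (x0 * G * c0) * x1 := by noncomm_ring
      _ = G * x1 := by rw [hE1]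
  rw [h5, hGx1, neg_neg] at h4
  -- h4 : P * x0 = x1 * G + x0 * A + x1 * G
  have h6 : x1 * G + x1 * G = P * x0 - x0 * A := by
    rw [h4]; abel
  have h7 : x1 * G = (2:ℝ)⁻¹ • (P * x0 - x0 * A) := by
    have : ((2:ℝ)) • (x1 * G) = P * x0 - x0 * A := by
      rw [two_smul]; exact h6
    rw [← this, smul_smul]
    norm_num
  have h8 : x1 = -(x1 * G * G) := by
    rw [mul_assoc, hGG, mul_neg, mul_one, neg_neg]
  have hPG : P * G = -(G * P) := by rw [hGp, neg_neg]
  have hAG : A * G = -(G * A) := by rw [hGa, neg_neg]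
  rw [h8, h7, smul_mul_assoc, sub_mul]
  have h9 : P * x0 * G = -(G * P * x0) := by
    rw [mul_assoc, ← hGx0, ← mul_assoc, hPG, neg_mul]
  have h10 : x0 * A * G = -(x0 * (G * A)) := by
    rw [mul_assoc, hAG, mul_neg]
  rw [h9, h10]
  module

end D4

section D5

open TrivSqZeroExt

variable (d : ℕ)

lemma core2 (G P A x0 x1 c0 c1 : Cl (d + 1))
    (hGG : G * G = -1)
    (hGx0 : G * x0 = x0 * G)
    (hGp : G * P = -(P * G))
    (hGa : G * A = -(A * G))
    (hN1 : x0 * c0 = 1)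
    (hN2 : x0 * c1 + x1 * c0 = 0)
    (hx1 : x1 = (2:ℝ)⁻¹ • (G * P * x0) - (2:ℝ)⁻¹ • (x0 * (G * A))) :
    x0 * G * c0 = G ∧ x0 * G * c1 + x0 * A * c0 + x1 * G * c0 = P := by
  have hPG : P * G = -(G * P) := by rw [hGp, neg_neg]
  have hAG : A * G = -(G * A) := by rw [hGa, neg_neg]
  have hC1 : x0 * G * c0 = G := by
    rw [← hGx0, mul_assoc, hN1, mul_one]
  refine ⟨hC1, ?_⟩
  have hx0c1 : x0 * c1 = -(x1 * c0) := eq_neg_of_add_eq_zero_left hN2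
  -- compute G * x1
  have hGx1 : G * x1 = -((2:ℝ)⁻¹ • (P * x0)) + (2:ℝ)⁻¹ • (x0 * A) := by
    rw [hx1, mul_sub, mul_smul_comm, mul_smul_comm]
    have e1 : G * (G * P * x0) = -(P * x0) := by
      calc G * (G * P * x0) = (G * G) * (P * x0) := by noncomm_ring
        _ = -(P * x0) := by rw [hGG]; noncomm_ring
    have e2 : G * (x0 * (G * A)) = -(x0 * A) := by
      calc G * (x0 * (G * A)) = (G * x0) * (G * A) := by noncomm_ring
        _ = (x0 * G) * (G * A) := by rw [hGx0]
        _ = x0 * ((G * G) * A) := by noncomm_ring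
        _ = -(x0 * A) := by rw [hGG]; noncomm_ring
    rw [e1, e2, smul_neg, smul_neg]
    abel
  -- compute x1 * G
  have hx1G : x1 * G = (2:ℝ)⁻¹ • (P * x0) - (2:ℝ)⁻¹ • (x0 * A) := by
    rw [hx1, sub_mul, smul_mul_assoc, smul_mul_assoc]
    have e1 : G * P * x0 * G = P * x0 := by
      calc G * P * x0 * G = G * P * (x0 * G) := by noncomm_ring
        _ = G * P * (G * x0) := by rw [hGx0]
        _ = G * (P * G) * x0 := by noncomm_ring
        _ = G * (-(G * P)) * x0 := by rw [hPG]
        _ = -((G * G) * (P * x0)) := by noncomm_ring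
        _ = P * x0 := by rw [hGG]; noncomm_ring
    have e2 : x0 * (G * A) * G = x0 * A := by
      calc x0 * (G * A) * G = x0 * (G * (A * G)) := by noncomm_ring
        _ = x0 * (G * (-(G * A))) := by rw [hAG]
        _ = -(x0 * ((G * G) * A)) := by noncomm_ring
        _ = x0 * A := by rw [hGG]; noncomm_ring
    rw [e1, e2]
  -- T1
  have hT1 : x0 * G * c1 = (2:ℝ)⁻¹ • (P * (x0 * c0)) - (2:ℝ)⁻¹ • (x0 * A * c0) := by
    have e1 : x0 * G * c1 = G * (x0 * c1) := by rw [← hGx0]; noncomm_ring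
    rw [e1, hx0c1, mul_neg, ← mul_assoc, hGx1]
    rw [add_mul, neg_mul, smul_mul_assoc, smul_mul_assoc, neg_add, neg_neg]
    rw [mul_assoc P x0 c0]
    abel
  have hT3 : x1 * G * c0 = (2:ℝ)⁻¹ • (P * (x0 * c0)) - (2:ℝ)⁻¹ • (x0 * A * c0) := by
    rw [hx1G, sub_mul, smul_mul_assoc, smul_mul_assoc, mul_assoc P x0 c0]
  rw [hT1, hT3, hN1, mul_one]
  have : ∀ y z : Cl (d + 1),
      ((2:ℝ)⁻¹ • y - (2:ℝ)⁻¹ • z) + z + ((2:ℝ)⁻¹ • y - (2:ℝ)⁻¹ • z) = y := by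
    intro y z
    module
  exact this P (x0 * A * c0)

end D5

end TFS

/-- For any `a, p ∈ ℝ^d`, `T_{ap} = F_{ap} ∩ Spun(d)`. -/
theorem T_eq_F_inter_spun (d : ℕ) (a p : Fin d → ℝ) :
    X.T d a p = X.F d a p ∩ X.Spun d := by
  open TrivSqZeroExt in
  ext x
  constructor
  · rintro ⟨hspun, heq⟩
    refine ⟨?_, hspun⟩
    obtain ⟨hZ0, hNm, -⟩ := hspun
    obtain ⟨hx0C, hGx1⟩ := TFS.Z0_le_W1 d hZ0
    obtain ⟨hN1, hN2⟩ := (TFS.Nm_iff d x).mp hNm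
    have hN1' := TFS.mul_eq_one_symm hN1
    have hE1 : fst x * TFS.gL d * conjC (d + 1) (fst x) = TFS.gL d := by
      have h := congrArg fst heq
      rwa [TFS.eqn_fst, TFS.vL_fst] at h
    have hE2 : fst x * TFS.gL d * conjC (d + 1) (snd x) +
        fst x * TFS.Iv d a * conjC (d + 1) (fst x) +
        snd x * TFS.gL d * conjC (d + 1) (fst x) = TFS.Iv d p := by
      have h := congrArg snd heq
      rwa [TFS.eqn_snd, TFS.vL_snd] at h
    have hx1 := TFS.core1 d (TFS.gL d) (TFS.Iv d p) (TFS.Iv d a) (fst x) (snd x)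
      (conjC (d + 1) (fst x)) (conjC (d + 1) (snd x)) (TFS.gL_sq d)
      (TFS.Csub_comm d hx0C) hGx1 (TFS.gL_anti_Iv d p) (TFS.gL_anti_Iv d a)
      hN1 hN1' hN2 hE1 hE2
    refine ⟨inl (fst x), TFS.inl_mem_ClE d hx0C, ?_⟩
    apply TrivSqZeroExt.ext
    · rw [TFS.aff_fst]
    · rw [TFS.aff_snd, ← hx1]
  · rintro ⟨⟨y, hy, hxy⟩, hspun⟩
    refine ⟨hspun, ?_⟩
    obtain ⟨hy0, hy1⟩ := TFS.ClE_structure d hy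
    have hyinl : y = inl (fst y) := TrivSqZeroExt.ext rfl (by rw [snd_inl, hy1])
    obtain ⟨hZ0, hNm, -⟩ := hspun
    obtain ⟨hN1, hN2⟩ := (TFS.Nm_iff d x).mp hNm
    have hxy' : (1 + (2:ℝ)⁻¹ • (X.eL d * X.eps d * X.iMap d p)) * inl (fst y) *
        (1 - (2:ℝ)⁻¹ • (X.eL d * X.eps d * X.iMap d a)) = x := by
      rw [← hyinl]; exact hxy
    have hx0 : fst x = fst y := by rw [← hxy', TFS.aff_fst]
    have hx1 : snd x = (2:ℝ)⁻¹ • (TFS.gL d * TFS.Iv d p * fst x) -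
        (2:ℝ)⁻¹ • (fst x * (TFS.gL d * TFS.Iv d a)) := by
      rw [← hxy', TFS.aff_snd, TFS.aff_fst]
    have hx0C : fst x ∈ TFS.Csub d := by rw [hx0]; exact hy0
    obtain ⟨hC1, hC2⟩ := TFS.core2 d (TFS.gL d) (TFS.Iv d p) (TFS.Iv d a) (fst x) (snd x)
      (conjC (d + 1) (fst x)) (conjC (d + 1) (snd x)) (TFS.gL_sq d)
      (TFS.Csub_comm d hx0C) (TFS.gL_anti_Iv d p) (TFS.gL_anti_Iv d a)
      hN1 hN2 hx1
    apply TrivSqZeroExt.ext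
    · rw [TFS.eqn_fst, TFS.vL_fst]
      exact hC1
    · rw [TFS.eqn_snd, TFS.vL_snd]
      exact hC2
end
end
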